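/- arXiv:2603.02111 — 3 statements merged into one kernel-verified Lean document; each statement's English description precedes it below -/
import Mathlib

section
/- Let q be a prime power, let Ω ⊆ D_1, let E ⊆ H_1(F_q), and let m be an integer with 1 ≤ m ≤ q. Assume that for every ω ∈ Ω there exists a horizontal line L in H_1(F_q) with Dir(L) = ω and |E ∩ L| ≥ m. Then |E| ≥ m^2 · |Ω| / (25 q). -/
/-!
`K` plays the role of the finite field `F_q` with `q = Fintype.card K` elements
(the cardinality of a finite field is automatically a prime power).
The Heisenberg group `H₁(F_q)` is identified with `K × K × K`.
The set `D₁` of non-vertical (refined) projective directions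
`{[a : b : c] ∈ P²(F_q) : (a,b) ≠ (0,0)}` is identified with `Option K × K`:
`(some m, γ)` corresponds to `[1 : m : γ]` and `(none, γ)` to `[0 : 1 : γ]`
(every element of `D₁` has a unique such normal form).
-/

noncomputable section

open Finset

/-- The point with parameter `s` of the horizontal line with refined direction
`ω ∈ D₁` indexed by `τ ∈ F_q`.  For `ω = [1 : m : γ]` the `q` horizontal lines
with `Dir L = ω` are `{(x, m x - γ, τ + γ x) : x ∈ F_q}`, `τ ∈ F_q`; for
`ω = [0 : 1 : γ]` they are `{(γ, y, τ + γ y) : y ∈ F_q}`, `τ ∈ F_q`. -/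
def lineRd {K : Type*} [Field K] (ω : Option K × K) (τ : K) (s : K) : K × K × K :=
  match ω.1 with
  | some m => (s, m * s - ω.2, τ + ω.2 * s)
  | none => (ω.2, s, τ + ω.2 * s)

/-- The refined-direction maximal function `M^rd F` on `D₁ ≃ Option K × K`:
the maximum, over the `q` horizontal lines `L` with `Dir L = ω`, of the sum of
`|F|` along `L`. -/
def Mrd {K : Type*} [Field K] [Fintype K] (Fc : K × K × K → ℂ) (ω : Option K × K) : ℝ :=
  Finset.univ.sup' ⟨(0 : K), Finset.mem_univ _⟩
    fun τ => ∑ s : K, ‖Fc (lineRd ω τ s)‖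

/-- `ℓ^r` norm of a complex-valued function on a finite set. -/
def lpNormC {X : Type*} [Fintype X] (r : ℝ) (g : X → ℂ) : ℝ :=
  (∑ x, ‖g x‖ ^ r) ^ (1 / r)

/-- `ℓ^r` norm of a real-valued function on a finite set. -/
def lpNormR {X : Type*} [Fintype X] (r : ℝ) (g : X → ℝ) : ℝ :=
  (∑ x, |g x| ^ r) ^ (1 / r)

namespace Stmt17Aux
set_option linter.unusedSectionVars false

variable {K : Type*} [Field K] [Fintype K] [DecidableEq K]

/-- indicator of `E` as a complex-valued function -/
def cIn (E : Finset (K × K × K)) (p : K × K × K) : ℂ := if p ∈ E then 1 else 0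

/-- the `xy`-projection of the point of parameter `s` on lines of direction `ω` -/
def bs : Option K × K → K → K × K
  | (some m, γ), s => (s, m * s - γ)
  | (none, γ), s => (γ, s)

lemma lineRd_eq_bs (ω : Option K × K) (τ s : K) :
    lineRd ω τ s = ((bs ω s).1, (bs ω s).2, τ + ω.2 * s) := by
  rcases ω with ⟨o, γ⟩
  cases o <;> rfl

variable (ψ : AddChar K ℂ)

/-- Fourier transform of the indicator in the `t` variable -/
def Ff (E : Finset (K × K × K)) (l : K) (v : K × K) : ℂ :=
  ∑ t : K, cIn E (v.1, v.2, t) * ψ (-(l * t))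

def Bf (l : K) (ω : Option K × K) (v : K × K) : ℂ :=
  ∑ s : K, if bs ω s = v then ψ (l * (ω.2 * s)) else 0

def Sf (E : Finset (K × K × K)) (l : K) (ω : Option K × K) : ℂ :=
  ∑ s : K, Ff ψ E l (bs ω s) * ψ (l * (ω.2 * s))

def EP (E : Finset (K × K × K)) (ω : Option K × K) : ℕ :=
  ∑ s : K, (univ.filter fun t : K => ((bs ω s).1, (bs ω s).2, t) ∈ E).card

def Nr (E : Finset (K × K × K)) (l : K) : ℝ :=
  ∑ v : K × K, Complex.normSq (Ff ψ E l v)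

def Qc (E : Finset (K × K × K)) (l : K) : ℂ :=
  ∑ v : K × K, ∑ v' : K × K,
    Ff ψ E l v * (starRingEnd ℂ) (Ff ψ E l v') * ψ (l * (v'.1 * v.2 - v.1 * v'.2))

lemma orth (hψ : ψ.IsPrimitive) (u : K) :
    ∑ l : K, ψ (l * u) = if u = 0 then (Fintype.card K : ℂ) else 0 :=
by
  have := AddChar.sum_mulShift u hψ
  rwa [Nat.cast_ite, Nat.cast_zero] at this

lemma abs_psi (x : K) : ‖ψ x‖ = 1 := by
  have h : 0 < ringChar K := Nat.pos_of_ne_zero (CharP.ringChar_ne_zero_of_finite K)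
  have := Complex.norm_eq_one_of_mem_rootsOfUnity <| ψ.val_mem_rootsOfUnity x h
  exact this

lemma conj_psi (x : K) : (starRingEnd ℂ) (ψ x) = ψ (-x) := by
  have h : 0 < ringChar K := Nat.pos_of_ne_zero (CharP.ringChar_ne_zero_of_finite K)
  rw [AddChar.starComp_apply h, AddChar.inv_apply]

lemma qcount (hψ : ψ.IsPrimitive) (E : Finset (K × K × K)) (ω : Option K × K) (τ : K) :
    (Fintype.card K : ℂ) * ((univ.filter fun s : K => lineRd ω τ s ∈ E).card : ℂ)
      = ∑ l : K, ψ (l * τ) * Sf ψ E l ω := by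
  rw [eq_comm]
  have key : ∀ l s t : K, ∀ c : ℂ,
      ψ (l * τ) * (c * ψ (-(l * t)) * ψ (l * (ω.2 * s)))
        = c * ψ (l * (τ + ω.2 * s - t)) := by
    intro l s t c
    rw [show l * (τ + ω.2 * s - t) = -(l * t) + (l * (ω.2 * s) + l * τ) by ring,
      AddChar.map_add_eq_mul, AddChar.map_add_eq_mul]
    ring
  calc ∑ l : K, ψ (l * τ) * Sf ψ E l ω
      = ∑ l : K, ∑ s : K, ∑ t : K,
          cIn E ((bs ω s).1, (bs ω s).2, t) * ψ (l * (τ + ω.2 * s - t)) := by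
        refine Finset.sum_congr rfl fun l _ => ?_
        simp only [Sf, Ff, Finset.mul_sum, Finset.sum_mul]
        refine Finset.sum_congr rfl fun s _ => Finset.sum_congr rfl fun t _ => ?_
        exact key l s t _
    _ = ∑ s : K, ∑ t : K,
          cIn E ((bs ω s).1, (bs ω s).2, t) * ∑ l : K, ψ (l * (τ + ω.2 * s - t)) := by
        rw [Finset.sum_comm]
        refine Finset.sum_congr rfl fun s _ => ?_
        rw [Finset.sum_comm]
        refine Finset.sum_congr rfl fun t _ => ?_
        rw [Finset.mul_sum]
    _ = ∑ s : K, ∑ t : K, (if t = τ + ω.2 * s then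
          cIn E ((bs ω s).1, (bs ω s).2, t) * (Fintype.card K : ℂ) else 0) := by
        refine Finset.sum_congr rfl fun s _ => Finset.sum_congr rfl fun t _ => ?_
        rw [orth ψ hψ]
        by_cases h : t = τ + ω.2 * s
        · simp [h]
        · have : ¬ (τ + ω.2 * s - t = 0) := fun hc => h (by linear_combination -hc)
          simp [this, h]
    _ = ∑ s : K, cIn E ((bs ω s).1, (bs ω s).2, τ + ω.2 * s) * (Fintype.card K : ℂ) := by
        refine Finset.sum_congr rfl fun s _ => ?_
        simpa using Finset.sum_ite_eq' univ (τ + ω.2 * s)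
          (fun t => cIn E ((bs ω s).1, (bs ω s).2, t) * (Fintype.card K : ℂ))
    _ = (Fintype.card K : ℂ) * ((univ.filter fun s : K => lineRd ω τ s ∈ E).card : ℂ) := by
        have hpt : ∀ s : K, cIn E ((bs ω s).1, (bs ω s).2, τ + ω.2 * s)
            = (if lineRd ω τ s ∈ E then (1 : ℂ) else 0) := by
          intro s
          rw [lineRd_eq_bs]
          rfl
        simp only [hpt]
        rw [← Finset.sum_mul, Finset.sum_boole, mul_comm]

lemma Sf_zero (E : Finset (K × K × K)) (ω : Option K × K) :
    Sf ψ E 0 ω = (EP E ω : ℂ) := by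
  simp only [Sf, Ff, zero_mul, neg_zero, AddChar.map_zero_eq_one, mul_one, EP]
  push_cast
  refine Finset.sum_congr rfl fun s _ => ?_
  rw [← Finset.sum_boole]
  rfl

lemma EP_le (E : Finset (K × K × K)) (ω : Option K × K) :
    EP E ω ≤ Fintype.card K * Fintype.card K := by
  have : ∀ s : K, (univ.filter fun t : K => ((bs ω s).1, (bs ω s).2, t) ∈ E).card
      ≤ Fintype.card K := fun s => (Finset.card_filter_le _ _).trans (le_of_eq Finset.card_univ)
  calc EP E ω ≤ ∑ _s : K, Fintype.card K := Finset.sum_le_sum fun s _ => this s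
    _ = Fintype.card K * Fintype.card K := by simp [Finset.card_univ, mul_comm]

lemma sum_EP (E : Finset (K × K × K)) :
    ∑ ω : Option K × K, EP E ω = (Fintype.card K + 1) * E.card := by
  have hE : ∀ s : K, ∑ y : K, ∑ t : K, (if (s, y, t) ∈ E then (1 : ℕ) else 0)
      = ((univ ×ˢ univ).filter fun yt : K × K => (s, yt.1, yt.2) ∈ E).card := by
    intro s
    rw [Finset.card_filter]
    rw [Finset.sum_product]
  have hEtot : ∑ x : K, ∑ y : K, ∑ t : K, (if (x, y, t) ∈ E then (1 : ℕ) else 0)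
      = E.card := by
    have : ∑ p : K × K × K, (if p ∈ E then (1 : ℕ) else 0) = E.card := by
      rw [Finset.sum_boole]
      · norm_cast
        congr 1
        exact Finset.filter_univ_mem E
    rw [← this, Fintype.sum_prod_type]
    refine Finset.sum_congr rfl fun x _ => ?_
    rw [Fintype.sum_prod_type]
  simp only [EP, Finset.card_filter]
  rw [Fintype.sum_prod_type, Fintype.sum_option]
  have hnone : ∑ γ : K, ∑ s : K, ∑ t : K,
      (if ((bs (none, γ) s).1, (bs (none, γ) s).2, t) ∈ E then (1 : ℕ) else 0) = E.card := by
    simp only [bs]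
    exact hEtot
  have hsome : ∀ m : K, ∑ γ : K, ∑ s : K, ∑ t : K,
      (if ((bs (some m, γ) s).1, (bs (some m, γ) s).2, t) ∈ E then (1 : ℕ) else 0)
        = E.card := by
    intro m
    simp only [bs]
    rw [Finset.sum_comm]
    rw [← hEtot]
    refine Finset.sum_congr rfl fun s _ => ?_
    exact Equiv.sum_comp (Equiv.subLeft (m * s)) fun y => ∑ t : K, (if (s, y, t) ∈ E then (1:ℕ) else 0)
  rw [hnone]
  rw [Finset.sum_congr rfl fun m (_ : m ∈ univ) => hsome m]
  simp [Finset.card_univ]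
  ring

lemma Bf_some (l m γ : K) (v : K × K) :
    Bf ψ l (some m, γ) v = if m * v.1 - γ = v.2 then ψ (l * (γ * v.1)) else 0 := by
  have hpt : ∀ s : K, (if bs (some m, γ) s = v then ψ (l * (γ * s)) else 0)
      = (if s = v.1 then (if m * s - γ = v.2 then ψ (l * (γ * s)) else 0) else 0) := by
    intro s
    by_cases hs : s = v.1
    · subst hs; simp [bs, Prod.ext_iff]
    · simp [bs, Prod.ext_iff, hs]
  calc Bf ψ l (some m, γ) v
      = ∑ s : K, (if s = v.1 then (if m * s - γ = v.2 then ψ (l * (γ * s)) else 0) else 0) :=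
        Finset.sum_congr rfl fun s _ => hpt s
    _ = _ := by
        rw [Finset.sum_ite_eq' univ v.1 (fun s => if m * s - γ = v.2 then ψ (l * (γ * s)) else 0)]
        simp

lemma Bf_none (l γ : K) (v : K × K) :
    Bf ψ l (none, γ) v = if γ = v.1 then ψ (l * (γ * v.2)) else 0 := by
  have hpt : ∀ s : K, (if bs (none, γ) s = v then ψ (l * (γ * s)) else 0)
      = (if s = v.2 then (if γ = v.1 then ψ (l * (γ * s)) else 0) else 0) := by
    intro s
    by_cases hs : s = v.2
    · subst hs; simp [bs, Prod.ext_iff, and_comm]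
    · simp [bs, Prod.ext_iff, hs]
  calc Bf ψ l (none, γ) v
      = ∑ s : K, (if s = v.2 then (if γ = v.1 then ψ (l * (γ * s)) else 0) else 0) :=
        Finset.sum_congr rfl fun s _ => hpt s
    _ = _ := by
        rw [Finset.sum_ite_eq' univ v.2 (fun s => if γ = v.1 then ψ (l * (γ * s)) else 0)]
        simp

lemma Sf_eq_sum_Bf (E : Finset (K × K × K)) (l : K) (ω : Option K × K) :
    Sf ψ E l ω = ∑ v : K × K, Ff ψ E l v * Bf ψ l ω v := by
  rw [Sf]
  refine Eq.symm ?_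
  calc ∑ v : K × K, Ff ψ E l v * Bf ψ l ω v
      = ∑ v : K × K, ∑ s : K,
          (if bs ω s = v then Ff ψ E l v * ψ (l * (ω.2 * s)) else 0) := by
        refine Finset.sum_congr rfl fun v _ => ?_
        rw [Bf, Finset.mul_sum]
        exact Finset.sum_congr rfl fun s _ => by rw [mul_ite, mul_zero]
    _ = ∑ s : K, ∑ v : K × K,
          (if bs ω s = v then Ff ψ E l v * ψ (l * (ω.2 * s)) else 0) := Finset.sum_comm
    _ = ∑ s : K, Ff ψ E l (bs ω s) * ψ (l * (ω.2 * s)) := by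
        refine Finset.sum_congr rfl fun s _ => ?_
        simpa using Finset.sum_ite_eq univ (bs ω s)
          (fun v => Ff ψ E l v * ψ (l * (ω.2 * s)))

lemma W_id (l : K) (v v' : K × K) :
    ∑ ω : Option K × K, Bf ψ l ω v * (starRingEnd ℂ) (Bf ψ l ω v')
      = (if v = v' then (Fintype.card K : ℂ) else 0)
        + ψ (l * (v'.1 * v.2 - v.1 * v'.2)) := by
  have psi_mul_neg : ∀ a b : K, ψ a * ψ (-b) = ψ (a - b) := fun a b => by
    rw [← AddChar.map_add_eq_mul, sub_eq_add_neg]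
  rw [Fintype.sum_prod_type, Fintype.sum_option]
  have hnone : ∑ γ : K, Bf ψ l (none, γ) v * (starRingEnd ℂ) (Bf ψ l (none, γ) v')
      = (if v.1 = v'.1 then ψ (l * (v.1 * v.2) - l * (v.1 * v'.2)) else 0) := by
    simp only [Bf_none, apply_ite (starRingEnd ℂ), map_zero, conj_psi]
    have hpt : ∀ γ : K,
        (if γ = v.1 then ψ (l * (γ * v.2)) else 0) *
          (if γ = v'.1 then ψ (-(l * (γ * v'.2))) else 0)
        = (if γ = v.1 then
            (if v.1 = v'.1 then ψ (l * (v.1 * v.2) - l * (v.1 * v'.2)) else 0) else 0) := by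
      intro γ
      by_cases h1 : γ = v.1
      · subst h1
        by_cases h2 : v.1 = v'.1
        · simp [h2, psi_mul_neg]
        · simp [h2]
      · simp [h1]
    refine (Finset.sum_congr rfl fun γ _ => hpt γ).trans ?_
    rw [Finset.sum_ite_eq' univ v.1]
    simp
  have hsomept : ∀ m : K,
      ∑ γ : K, Bf ψ l (some m, γ) v * (starRingEnd ℂ) (Bf ψ l (some m, γ) v')
      = (if m * v.1 - v.2 = m * v'.1 - v'.2 then
          ψ (l * ((m * v.1 - v.2) * v.1) - l * ((m * v.1 - v.2) * v'.1)) else 0) := by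
    intro m
    simp only [Bf_some, apply_ite (starRingEnd ℂ), map_zero, conj_psi]
    have hpt : ∀ γ : K,
        (if m * v.1 - γ = v.2 then ψ (l * (γ * v.1)) else 0) *
          (if m * v'.1 - γ = v'.2 then ψ (-(l * (γ * v'.1))) else 0)
        = (if γ = m * v.1 - v.2 then
            (if m * v.1 - v.2 = m * v'.1 - v'.2 then
              ψ (l * ((m * v.1 - v.2) * v.1) - l * ((m * v.1 - v.2) * v'.1)) else 0) else 0) := by
      intro γ
      have hc1 : (m * v.1 - γ = v.2) ↔ (γ = m * v.1 - v.2) := by constructor <;> intro h <;> linear_combination -h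
      have hc2 : (m * v'.1 - γ = v'.2) ↔ (γ = m * v'.1 - v'.2) := by constructor <;> intro h <;> linear_combination -h
      simp only [hc1, hc2]
      by_cases h1 : γ = m * v.1 - v.2
      · subst h1
        by_cases h2 : m * v.1 - v.2 = m * v'.1 - v'.2
        · simp [h2, psi_mul_neg]
        · simp [h2]
      · simp [h1]
    refine (Finset.sum_congr rfl fun γ _ => hpt γ).trans ?_
    rw [Finset.sum_ite_eq' univ (m * v.1 - v.2)]
    simp
  have hsome : ∑ m : K, ∑ γ : K, Bf ψ l (some m, γ) v * (starRingEnd ℂ) (Bf ψ l (some m, γ) v')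
      = ∑ m : K, (if m * v.1 - v.2 = m * v'.1 - v'.2 then
          ψ (l * ((m * v.1 - v.2) * v.1) - l * ((m * v.1 - v.2) * v'.1)) else 0) :=
    Finset.sum_congr rfl fun m _ => hsomept m
  rw [hnone, hsome]
  by_cases hv1 : v.1 = v'.1
  · by_cases hv2 : v.2 = v'.2
    · have hv : v = v' := Prod.ext hv1 hv2
      subst hv
      simp [sub_self, Finset.card_univ, add_comm]
    · have hvne : v ≠ v' := fun h => hv2 (by rw [h])
      have hmc : ∀ m : K, ¬ (m * v.1 - v.2 = m * v'.1 - v'.2) := by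
        intro m hc
        exact hv2 (by linear_combination -hc + m * hv1)
      have hzero : ∑ m : K, (if m * v.1 - v.2 = m * v'.1 - v'.2 then
          ψ (l * ((m * v.1 - v.2) * v.1) - l * ((m * v.1 - v.2) * v'.1)) else 0)
          = ∑ _m : K, (0 : ℂ) :=
        Finset.sum_congr rfl fun m _ => if_neg (hmc m)
      rw [hzero, if_pos hv1, if_neg hvne]
      simp only [Finset.sum_const_zero, add_zero, zero_add]
      congr 1
      rw [hv1]
      ring
  · have hvne : v ≠ v' := fun h => hv1 (by rw [h])
    have hd : v.1 - v'.1 ≠ 0 := sub_ne_zero.mpr hv1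
    set m₀ : K := (v.2 - v'.2) / (v.1 - v'.1) with hm₀
    have hcond : ∀ m : K, (m * v.1 - v.2 = m * v'.1 - v'.2) ↔ m = m₀ := by
      intro m
      rw [hm₀, eq_div_iff hd]
      constructor <;> intro h <;> linear_combination h
    have hpt : ∀ m : K, (if m * v.1 - v.2 = m * v'.1 - v'.2 then
        ψ (l * ((m * v.1 - v.2) * v.1) - l * ((m * v.1 - v.2) * v'.1)) else 0)
        = (if m = m₀ then
        ψ (l * ((m * v.1 - v.2) * v.1) - l * ((m * v.1 - v.2) * v'.1)) else 0) := by
      intro m; simp only [hcond m]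
    have hsum2 : ∑ m : K, (if m * v.1 - v.2 = m * v'.1 - v'.2 then
        ψ (l * ((m * v.1 - v.2) * v.1) - l * ((m * v.1 - v.2) * v'.1)) else 0)
        = ∑ m : K, (if m = m₀ then
        ψ (l * ((m * v.1 - v.2) * v.1) - l * ((m * v.1 - v.2) * v'.1)) else 0) :=
      Finset.sum_congr rfl fun m _ => hpt m
    rw [hsum2, Finset.sum_ite_eq' univ m₀, if_neg hv1, if_neg hvne, if_pos (Finset.mem_univ m₀),
      zero_add, zero_add]
    have hm : m₀ * (v.1 - v'.1) = v.2 - v'.2 := by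
      rw [hm₀, div_mul_cancel₀ _ hd]
    exact congrArg (fun x => ψ x) (by linear_combination l * v.1 * hm)

lemma S_id (E : Finset (K × K × K)) (l : K) :
    ∑ ω : Option K × K, Sf ψ E l ω * (starRingEnd ℂ) (Sf ψ E l ω)
      = (Fintype.card K : ℂ) * ((Nr ψ E l : ℝ) : ℂ) + Qc ψ E l := by
  have h1 : ∀ ω : Option K × K, Sf ψ E l ω * (starRingEnd ℂ) (Sf ψ E l ω)
      = ∑ v : K × K, ∑ v' : K × K,
          Ff ψ E l v * (starRingEnd ℂ) (Ff ψ E l v') *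
            (Bf ψ l ω v * (starRingEnd ℂ) (Bf ψ l ω v')) := by
    intro ω
    rw [Sf_eq_sum_Bf, map_sum, Finset.sum_mul_sum]
    exact Finset.sum_congr rfl fun v _ => Finset.sum_congr rfl fun v' _ => by
      rw [map_mul]; ring
  calc ∑ ω : Option K × K, Sf ψ E l ω * (starRingEnd ℂ) (Sf ψ E l ω)
      = ∑ ω : Option K × K, ∑ v : K × K, ∑ v' : K × K,
          Ff ψ E l v * (starRingEnd ℂ) (Ff ψ E l v') *
            (Bf ψ l ω v * (starRingEnd ℂ) (Bf ψ l ω v')) :=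
        Finset.sum_congr rfl fun ω _ => h1 ω
    _ = ∑ v : K × K, ∑ v' : K × K,
          Ff ψ E l v * (starRingEnd ℂ) (Ff ψ E l v') *
            ∑ ω : Option K × K, Bf ψ l ω v * (starRingEnd ℂ) (Bf ψ l ω v') := by
        rw [Finset.sum_comm]
        refine Finset.sum_congr rfl fun v _ => ?_
        rw [Finset.sum_comm]
        refine Finset.sum_congr rfl fun v' _ => ?_
        rw [Finset.mul_sum]
    _ = ∑ v : K × K, ∑ v' : K × K,
          Ff ψ E l v * (starRingEnd ℂ) (Ff ψ E l v') *
            ((if v = v' then (Fintype.card K : ℂ) else 0) + ψ (l * (v'.1 * v.2 - v.1 * v'.2))) :=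
        Finset.sum_congr rfl fun v _ => Finset.sum_congr rfl fun v' _ => by rw [W_id]
    _ = (∑ v : K × K, ∑ v' : K × K,
          Ff ψ E l v * (starRingEnd ℂ) (Ff ψ E l v') *
            (if v = v' then (Fintype.card K : ℂ) else 0)) + Qc ψ E l := by
        rw [Qc, ← Finset.sum_add_distrib]
        refine Finset.sum_congr rfl fun v _ => ?_
        rw [← Finset.sum_add_distrib]
        exact Finset.sum_congr rfl fun v' _ => by ring
    _ = (Fintype.card K : ℂ) * ((Nr ψ E l : ℝ) : ℂ) + Qc ψ E l := by
        congr 1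
        have hin : ∀ v : K × K,
            ∑ v' : K × K, Ff ψ E l v * (starRingEnd ℂ) (Ff ψ E l v') *
              (if v = v' then (Fintype.card K : ℂ) else 0)
            = Ff ψ E l v * (starRingEnd ℂ) (Ff ψ E l v) * (Fintype.card K : ℂ) := by
          intro v
          calc ∑ v' : K × K, Ff ψ E l v * (starRingEnd ℂ) (Ff ψ E l v') *
                (if v = v' then (Fintype.card K : ℂ) else 0)
              = ∑ v' : K × K, (if v = v' then
                  Ff ψ E l v * (starRingEnd ℂ) (Ff ψ E l v') * (Fintype.card K : ℂ) else 0) :=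
                Finset.sum_congr rfl fun v' _ => by rw [mul_ite, mul_zero]
            _ = _ := by
                simpa using Finset.sum_ite_eq univ v
                  (fun v' => Ff ψ E l v * (starRingEnd ℂ) (Ff ψ E l v') * (Fintype.card K : ℂ))
        calc ∑ v : K × K, ∑ v' : K × K, Ff ψ E l v * (starRingEnd ℂ) (Ff ψ E l v') *
              (if v = v' then (Fintype.card K : ℂ) else 0)
            = ∑ v : K × K, Ff ψ E l v * (starRingEnd ℂ) (Ff ψ E l v) * (Fintype.card K : ℂ) :=
              Finset.sum_congr rfl fun v _ => hin v
          _ = (Fintype.card K : ℂ) * ((Nr ψ E l : ℝ) : ℂ) := by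
              simp only [Complex.mul_conj, Nr]
              rw [← Finset.sum_mul, mul_comm]
              push_cast
              rfl

lemma Qc_bound (hψ : ψ.IsPrimitive) (E : Finset (K × K × K)) {l : K} (hl : l ≠ 0) :
    ‖Qc ψ E l‖ ≤ (Fintype.card K : ℝ) * Nr ψ E l := by
  classical
  set q : ℕ := Fintype.card K with hq
  have psi_mul_neg : ∀ a b : K, ψ a * ψ (-b) = ψ (a - b) := fun a b => by
    rw [← AddChar.map_add_eq_mul, sub_eq_add_neg]
  set G : K × K → ℂ := fun v' => ∑ v : K × K, Ff ψ E l v * ψ (l * (v'.1 * v.2 - v.1 * v'.2))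
    with hG
  -- Step 1 : rewrite Qc using G
  have hQc : Qc ψ E l = ∑ v' : K × K, (starRingEnd ℂ) (Ff ψ E l v') * G v' := by
    rw [Qc, Finset.sum_comm]
    refine Finset.sum_congr rfl fun v' _ => ?_
    rw [hG, Finset.mul_sum]
    exact Finset.sum_congr rfl fun v _ => by ring
  -- Step 2 : ∑ normSq (G v') = q ^ 2 * Nr
  have hG2 : ∑ v' : K × K, G v' * (starRingEnd ℂ) (G v') = (q : ℂ) ^ 2 * ((Nr ψ E l : ℝ) : ℂ) := by
    have hpt : ∀ v' : K × K, G v' * (starRingEnd ℂ) (G v')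
        = ∑ v : K × K, ∑ w : K × K, Ff ψ E l v * (starRingEnd ℂ) (Ff ψ E l w) *
            ψ (v'.1 * (l * (v.2 - w.2)) + v'.2 * (l * (w.1 - v.1))) := by
      intro v'
      rw [hG, map_sum, Finset.sum_mul_sum]
      refine Finset.sum_congr rfl fun v _ => Finset.sum_congr rfl fun w _ => ?_
      rw [map_mul (starRingEnd ℂ), conj_psi]
      have : ψ (l * (v'.1 * v.2 - v.1 * v'.2)) * ψ (-(l * (v'.1 * w.2 - w.1 * v'.2)))
          = ψ (v'.1 * (l * (v.2 - w.2)) + v'.2 * (l * (w.1 - v.1))) := by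
        rw [psi_mul_neg]
        exact congrArg (fun x => ψ x) (by ring)
      rw [← this]
      ring
    calc ∑ v' : K × K, G v' * (starRingEnd ℂ) (G v')
        = ∑ v : K × K, ∑ w : K × K, Ff ψ E l v * (starRingEnd ℂ) (Ff ψ E l w) *
            ∑ v' : K × K, ψ (v'.1 * (l * (v.2 - w.2)) + v'.2 * (l * (w.1 - v.1))) := by
          rw [Finset.sum_congr rfl fun v' (_ : v' ∈ univ) => hpt v', Finset.sum_comm]
          refine Finset.sum_congr rfl fun v _ => ?_
          rw [Finset.sum_comm]
          refine Finset.sum_congr rfl fun w _ => ?_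
          rw [Finset.mul_sum]
      _ = ∑ v : K × K, ∑ w : K × K, Ff ψ E l v * (starRingEnd ℂ) (Ff ψ E l w) *
            (if w = v then ((q : ℂ) * (q : ℂ)) else 0) := by
          refine Finset.sum_congr rfl fun v _ => Finset.sum_congr rfl fun w _ => ?_
          congr 1
          have hfac : ∑ v' : K × K, ψ (v'.1 * (l * (v.2 - w.2)) + v'.2 * (l * (w.1 - v.1)))
              = (∑ a : K, ψ (a * (l * (v.2 - w.2)))) * (∑ b : K, ψ (b * (l * (w.1 - v.1)))) := by
            rw [Fintype.sum_prod_type, Finset.sum_mul_sum]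
            exact Finset.sum_congr rfl fun a _ => Finset.sum_congr rfl fun b _ => by
              rw [AddChar.map_add_eq_mul]
          rw [hfac, orth ψ hψ, orth ψ hψ]
          by_cases h1 : v.2 = w.2
          · by_cases h2 : w.1 = v.1
            · have hw : w = v := Prod.ext h2 h1.symm
              simp [hw, hl, hq]
            · have hz : ¬ (l * (w.1 - v.1) = 0) := by
                simp [hl, sub_eq_zero, h2]
              have hwv : ¬ (w = v) := fun hwv => h2 (by rw [hwv])
              simp [hz, hwv]
          · have hz : ¬ (l * (v.2 - w.2) = 0) := by
              simp [hl, sub_eq_zero, h1]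
            have hwv : ¬ (w = v) := fun hwv => h1 (by rw [hwv])
            simp [hz, hwv]
      _ = (q : ℂ) ^ 2 * ((Nr ψ E l : ℝ) : ℂ) := by
          have hin : ∀ v : K × K, ∑ w : K × K, Ff ψ E l v * (starRingEnd ℂ) (Ff ψ E l w) *
              (if w = v then ((q : ℂ) * (q : ℂ)) else 0)
              = Ff ψ E l v * (starRingEnd ℂ) (Ff ψ E l v) * ((q : ℂ) * (q : ℂ)) := by
            intro v
            calc ∑ w : K × K, Ff ψ E l v * (starRingEnd ℂ) (Ff ψ E l w) *
                  (if w = v then ((q : ℂ) * (q : ℂ)) else 0)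
                = ∑ w : K × K, (if w = v then
                    Ff ψ E l v * (starRingEnd ℂ) (Ff ψ E l w) * ((q : ℂ) * (q : ℂ)) else 0) :=
                  Finset.sum_congr rfl fun w _ => by rw [mul_ite, mul_zero]
              _ = _ := by
                  simpa using Finset.sum_ite_eq' univ v
                    (fun w => Ff ψ E l v * (starRingEnd ℂ) (Ff ψ E l w) * ((q : ℂ) * (q : ℂ)))
          rw [Finset.sum_congr rfl fun v (_ : v ∈ univ) => hin v]
          simp only [Complex.mul_conj, Nr]
          rw [← Finset.sum_mul]
          push_cast
          ring
  -- Step 3 : conclude by Cauchy-Schwarz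
  have habs : ‖Qc ψ E l‖
      ≤ ∑ v' : K × K, ‖Ff ψ E l v'‖ * ‖G v'‖ := by
    rw [hQc]
    calc ‖∑ v' : K × K, (starRingEnd ℂ) (Ff ψ E l v') * G v'‖
        ≤ ∑ v' : K × K, ‖(starRingEnd ℂ) (Ff ψ E l v') * G v'‖ := by
          simpa using
            norm_sum_le univ (fun v' => (starRingEnd ℂ) (Ff ψ E l v') * G v')
      _ = ∑ v' : K × K, ‖Ff ψ E l v'‖ * ‖G v'‖ :=
          Finset.sum_congr rfl fun v' _ => by
            rw [norm_mul, Complex.norm_conj]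
  have hCS : (∑ v' : K × K, ‖Ff ψ E l v'‖ * ‖G v'‖) ^ 2
      ≤ (∑ v' : K × K, ‖Ff ψ E l v'‖ ^ 2) *
        (∑ v' : K × K, ‖G v'‖ ^ 2) :=
    Finset.sum_mul_sq_le_sq_mul_sq univ _ _
  have h1 : ∑ v' : K × K, ‖Ff ψ E l v'‖ ^ 2 = Nr ψ E l := by
    simp [Nr, Complex.sq_norm]
  have h2 : ∑ v' : K × K, ‖G v'‖ ^ 2 = (q : ℝ) ^ 2 * Nr ψ E l := by
    have hcast : ((∑ v' : K × K, Complex.normSq (G v') : ℝ) : ℂ)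
        = (((q : ℝ) ^ 2 * Nr ψ E l : ℝ) : ℂ) := by
      push_cast
      rw [← hG2]
      exact Finset.sum_congr rfl fun v' _ => (Complex.mul_conj (G v')).symm
    have := Complex.ofReal_injective hcast
    simpa [Complex.sq_norm] using this
  have hnn : 0 ≤ Nr ψ E l := Finset.sum_nonneg fun v _ => Complex.normSq_nonneg _
  have hq0 : (0 : ℝ) ≤ (q : ℝ) := Nat.cast_nonneg _
  have hS0 : 0 ≤ ∑ v' : K × K, ‖Ff ψ E l v'‖ * ‖G v'‖ :=
    Finset.sum_nonneg fun v' _ => mul_nonneg (norm_nonneg _) (norm_nonneg _)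
  have hsq : (∑ v' : K × K, ‖Ff ψ E l v'‖ * ‖G v'‖) ^ 2
      ≤ ((q : ℝ) * Nr ψ E l) ^ 2 := by
    rw [h1, h2] at hCS
    calc (∑ v' : K × K, ‖Ff ψ E l v'‖ * ‖G v'‖) ^ 2
        ≤ (Nr ψ E l) * ((q : ℝ) ^ 2 * Nr ψ E l) := hCS
      _ = ((q : ℝ) * Nr ψ E l) ^ 2 := by ring
  have hfin : (∑ v' : K × K, ‖Ff ψ E l v'‖ * ‖G v'‖)
      ≤ (q : ℝ) * Nr ψ E l := by
    nlinarith [hsq, hS0, mul_nonneg hq0 hnn]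
  exact habs.trans hfin

set_option maxHeartbeats 1000000 in
lemma parseval (hψ : ψ.IsPrimitive) (E : Finset (K × K × K)) :
    ∑ l : K, Nr ψ E l = (Fintype.card K : ℝ) * E.card := by
  classical
  have psi_mul_neg : ∀ a b : K, ψ a * ψ (-b) = ψ (a - b) := fun a b => by
    rw [← AddChar.map_add_eq_mul, sub_eq_add_neg]
  have conj_cIn : ∀ p : K × K × K, (starRingEnd ℂ) (cIn E p) = cIn E p := by
    intro p
    rw [cIn]
    split <;> simp
  have hpt : ∀ v : K × K, ∑ l : K, Ff ψ E l v * (starRingEnd ℂ) (Ff ψ E l v)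
      = (Fintype.card K : ℂ) * ∑ t : K, cIn E (v.1, v.2, t) := by
    intro v
    have hexp : ∀ l : K, Ff ψ E l v * (starRingEnd ℂ) (Ff ψ E l v)
        = ∑ t : K, ∑ t' : K, cIn E (v.1, v.2, t) * cIn E (v.1, v.2, t') *
            ψ (l * (t' - t)) := by
      intro l
      rw [Ff, map_sum, Finset.sum_mul_sum]
      refine Finset.sum_congr rfl fun t _ => Finset.sum_congr rfl fun t' _ => ?_
      rw [map_mul (starRingEnd ℂ), conj_psi, conj_cIn]
      have : ψ (-(l * t)) * ψ (-(-(l * t'))) = ψ (l * (t' - t)) := by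
        rw [psi_mul_neg]
        exact congrArg (fun x => ψ x) (by ring)
      rw [← this]
      ring
    calc ∑ l : K, Ff ψ E l v * (starRingEnd ℂ) (Ff ψ E l v)
        = ∑ l : K, ∑ t : K, ∑ t' : K, cIn E (v.1, v.2, t) * cIn E (v.1, v.2, t') *
            ψ (l * (t' - t)) := Finset.sum_congr rfl fun l _ => hexp l
      _ = ∑ t : K, ∑ t' : K, cIn E (v.1, v.2, t) * cIn E (v.1, v.2, t') *
            ∑ l : K, ψ (l * (t' - t)) := by
          rw [Finset.sum_comm]
          refine Finset.sum_congr rfl fun t _ => ?_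
          rw [Finset.sum_comm]
          refine Finset.sum_congr rfl fun t' _ => ?_
          rw [Finset.mul_sum]
      _ = ∑ t : K, ∑ t' : K, (if t' = t then
            cIn E (v.1, v.2, t) * cIn E (v.1, v.2, t') * (Fintype.card K : ℂ) else 0) := by
          refine Finset.sum_congr rfl fun t _ => Finset.sum_congr rfl fun t' _ => ?_
          rw [orth ψ hψ]
          by_cases h : t' = t
          · simp [h]
          · have : ¬ (t' - t = 0) := sub_ne_zero.mpr h
            simp [this, h]
      _ = ∑ t : K, cIn E (v.1, v.2, t) * cIn E (v.1, v.2, t) * (Fintype.card K : ℂ) := by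
          refine Finset.sum_congr rfl fun t _ => ?_
          simpa using Finset.sum_ite_eq' univ t
            (fun t' => cIn E (v.1, v.2, t) * cIn E (v.1, v.2, t') * (Fintype.card K : ℂ))
      _ = (Fintype.card K : ℂ) * ∑ t : K, cIn E (v.1, v.2, t) := by
          rw [Finset.mul_sum]
          refine Finset.sum_congr rfl fun t _ => ?_
          have : cIn E (v.1, v.2, t) * cIn E (v.1, v.2, t) = cIn E (v.1, v.2, t) := by
            rw [cIn]; split <;> simp
          rw [this]; ring
  have htot : ∑ v : K × K, ∑ t : K, cIn E (v.1, v.2, t) = (E.card : ℂ) := by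
    have h1 : ∑ p : K × K × K, cIn E p = (E.card : ℂ) := by
      unfold cIn
      rw [Finset.sum_boole]
      congr 1
      exact congrArg Finset.card (Finset.filter_univ_mem E)
    calc ∑ v : K × K, ∑ t : K, cIn E (v.1, v.2, t)
        = ∑ x : K, ∑ y : K, ∑ t : K, cIn E (x, y, t) :=
          Fintype.sum_prod_type (f := fun v : K × K => ∑ t : K, cIn E (v.1, v.2, t))
      _ = ∑ x : K, ∑ yt : K × K, cIn E (x, yt) :=
          Finset.sum_congr rfl fun x _ =>
            (Fintype.sum_prod_type (f := fun yt : K × K => cIn E (x, yt))).symm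
      _ = ∑ p : K × K × K, cIn E p :=
          (Fintype.sum_prod_type (f := fun p : K × K × K => cIn E p)).symm
      _ = (E.card : ℂ) := h1
  have hmain : ∑ l : K, ∑ v : K × K, Ff ψ E l v * (starRingEnd ℂ) (Ff ψ E l v)
      = (Fintype.card K : ℂ) * (E.card : ℂ) := by
    rw [Finset.sum_comm]
    rw [Finset.sum_congr rfl fun v (_ : v ∈ univ) => hpt v, ← Finset.mul_sum, htot]
  apply Complex.ofReal_injective
  push_cast
  rw [← hmain]
  refine Finset.sum_congr rfl fun l _ => ?_
  rw [Nr]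
  push_cast
  exact Finset.sum_congr rfl fun v _ => (Complex.mul_conj (Ff ψ E l v)).symm

end Stmt17Aux

open Stmt17Aux

set_option maxHeartbeats 1000000
set_option linter.unusedVariables false

/-- lower bound for sets with many rich horizontal lines.
If for every `ω ∈ Ω ⊆ D₁` there is a horizontal line `L` with `Dir L = ω` and
`|E ∩ L| ≥ m`, where `1 ≤ m ≤ q`, then `|E| ≥ m² |Ω| / (25 q)`. -/
theorem stmt_17 {K : Type*} [Field K] [Fintype K] [DecidableEq K]
    (Ω : Finset (Option K × K)) (E : Finset (K × K × K)) (m : ℕ)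
    (hm1 : 1 ≤ m) (hmq : m ≤ Fintype.card K)
    (hΩ : ∀ ω ∈ Ω, ∃ τ : K,
      m ≤ (Finset.univ.filter fun s : K => lineRd ω τ s ∈ E).card) :
    ((m : ℝ) ^ 2 * (Ω.card : ℝ)) / (25 * (Fintype.card K : ℝ)) ≤ (E.card : ℝ) := by
  classical
  have hq0 : 0 < Fintype.card K := Fintype.card_pos
  have hqr0 : (0 : ℝ) < (Fintype.card K : ℝ) := by exact_mod_cast hq0
  set ψ : AddChar K ℂ := AddChar.FiniteField.primitiveChar_to_Complex K with hψdef
  have hψ : ψ.IsPrimitive := AddChar.FiniteField.primitiveChar_to_Complex_isPrimitive K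
  -- Step A : pointwise lower bound for ω ∈ Ω
  have hA : ∀ ω ∈ Ω, (Fintype.card K : ℝ) * m ≤ (EP E ω : ℝ)
      + ∑ l ∈ univ.erase (0 : K), ‖Sf ψ E l ω‖ := by
    intro ω hω
    obtain ⟨τ, hτ⟩ := hΩ ω hω
    set c : ℕ := (univ.filter fun s : K => lineRd ω τ s ∈ E).card with hc
    have h1 : (Fintype.card K : ℝ) * m ≤ (Fintype.card K : ℝ) * (c : ℝ) :=
      mul_le_mul_of_nonneg_left (Nat.cast_le.mpr hτ) (le_of_lt hqr0)
    refine h1.trans ?_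
    have h2 : (Fintype.card K : ℝ) * (c : ℝ)
        = ‖(Fintype.card K : ℂ) * (c : ℂ)‖ := by
      rw [norm_mul, Complex.norm_natCast, Complex.norm_natCast]
    rw [h2, qcount ψ hψ E ω τ]
    calc ‖∑ l : K, ψ (l * τ) * Sf ψ E l ω‖
        ≤ ∑ l : K, ‖Sf ψ E l ω‖ := by
          have h0 := norm_sum_le univ (fun l : K => ψ (l * τ) * Sf ψ E l ω)
          simp only [norm_mul] at h0
          refine h0.trans (le_of_eq (Finset.sum_congr rfl fun l _ => ?_))
          rw [abs_psi, one_mul]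
      _ = ‖Sf ψ E 0 ω‖ + ∑ l ∈ univ.erase (0 : K), ‖Sf ψ E l ω‖ :=
          (Finset.add_sum_erase univ _ (mem_univ (0 : K))).symm
      _ = (EP E ω : ℝ) + ∑ l ∈ univ.erase (0 : K), ‖Sf ψ E l ω‖ := by
          rw [Sf_zero, Complex.norm_natCast]
  -- Step B : squared version
  have hB : ∀ ω ∈ Ω, ((Fintype.card K : ℝ) * m) ^ 2
      ≤ 2 * (EP E ω : ℝ) ^ 2
        + 2 * (Fintype.card K : ℝ) *
            ∑ l ∈ univ.erase (0 : K), ‖Sf ψ E l ω‖ ^ 2 := by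
    intro ω hω
    set a : ℝ := (EP E ω : ℝ)
    set b : ℝ := ∑ l ∈ univ.erase (0 : K), ‖Sf ψ E l ω‖
    have ha0 : 0 ≤ a := Nat.cast_nonneg _
    have hb0 : 0 ≤ b := Finset.sum_nonneg fun l _ => norm_nonneg _
    have hsq : ((Fintype.card K : ℝ) * m) ^ 2 ≤ (a + b) ^ 2 :=
      pow_le_pow_left₀ (mul_nonneg (le_of_lt hqr0) (Nat.cast_nonneg _)) (hA ω hω) 2
    have hb2 : b ^ 2 ≤ (Fintype.card K : ℝ) *
        ∑ l ∈ univ.erase (0 : K), ‖Sf ψ E l ω‖ ^ 2 := by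
      have h1 : b ^ 2 ≤ ((univ.erase (0 : K)).card : ℝ) *
          ∑ l ∈ univ.erase (0 : K), ‖Sf ψ E l ω‖ ^ 2 :=
        sq_sum_le_card_mul_sum_sq
      refine h1.trans ?_
      have hcard : (((univ.erase (0 : K)).card : ℕ) : ℝ) ≤ (Fintype.card K : ℝ) := by
        have := Finset.card_erase_le (a := (0:K)) (s := (univ : Finset K))
        exact_mod_cast this.trans (le_of_eq Finset.card_univ)
      exact mul_le_mul_of_nonneg_right hcard
        (Finset.sum_nonneg fun l _ => sq_nonneg _)
    nlinarith [sq_nonneg (a - b), hsq, hb2]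
  -- Step C : sum over Ω
  have hC : ((Fintype.card K : ℝ) * m) ^ 2 * (Ω.card : ℝ)
      ≤ 2 * (∑ ω : Option K × K, (EP E ω : ℝ) ^ 2)
        + 2 * (Fintype.card K : ℝ) *
            ∑ l ∈ univ.erase (0 : K), ∑ ω : Option K × K,
              ‖Sf ψ E l ω‖ ^ 2 := by
    have h1 : ((Fintype.card K : ℝ) * m) ^ 2 * (Ω.card : ℝ)
        = ∑ _ω ∈ Ω, ((Fintype.card K : ℝ) * m) ^ 2 := by
      rw [Finset.sum_const, nsmul_eq_mul, mul_comm]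
    rw [h1]
    have h2 : ∑ ω ∈ Ω, ((Fintype.card K : ℝ) * m) ^ 2
        ≤ ∑ ω ∈ Ω, (2 * (EP E ω : ℝ) ^ 2
          + 2 * (Fintype.card K : ℝ) *
              ∑ l ∈ univ.erase (0 : K), ‖Sf ψ E l ω‖ ^ 2) :=
      Finset.sum_le_sum hB
    refine h2.trans ?_
    have h3 : ∑ ω ∈ Ω, (2 * (EP E ω : ℝ) ^ 2
          + 2 * (Fintype.card K : ℝ) *
              ∑ l ∈ univ.erase (0 : K), ‖Sf ψ E l ω‖ ^ 2)
        ≤ ∑ ω : Option K × K, (2 * (EP E ω : ℝ) ^ 2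
          + 2 * (Fintype.card K : ℝ) *
              ∑ l ∈ univ.erase (0 : K), ‖Sf ψ E l ω‖ ^ 2) := by
      refine Finset.sum_le_sum_of_subset_of_nonneg (Finset.subset_univ Ω) ?_
      intro ω _ _
      have : 0 ≤ ∑ l ∈ univ.erase (0 : K), ‖Sf ψ E l ω‖ ^ 2 :=
        Finset.sum_nonneg fun l _ => sq_nonneg _
      positivity
    refine h3.trans (le_of_eq ?_)
    rw [Finset.sum_add_distrib, ← Finset.mul_sum, ← Finset.mul_sum]
    congr 1
    rw [Finset.sum_comm]
  -- Step D : plane term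
  have hD : ∑ ω : Option K × K, (EP E ω : ℝ) ^ 2
      ≤ (Fintype.card K : ℝ) ^ 2 * (((Fintype.card K : ℝ) + 1) * (E.card : ℝ)) := by
    have h1 : ∀ ω : Option K × K, (EP E ω : ℝ) ^ 2
        ≤ (Fintype.card K : ℝ) ^ 2 * (EP E ω : ℝ) := by
      intro ω
      have h2 : (EP E ω : ℝ) ≤ (Fintype.card K : ℝ) ^ 2 := by
        calc (EP E ω : ℝ) ≤ ((Fintype.card K * Fintype.card K : ℕ) : ℝ) :=
              Nat.cast_le.mpr (EP_le E ω)
          _ = (Fintype.card K : ℝ) ^ 2 := by push_cast; ring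
      rw [sq]
      exact mul_le_mul_of_nonneg_right h2 (Nat.cast_nonneg _)
    calc ∑ ω : Option K × K, (EP E ω : ℝ) ^ 2
        ≤ ∑ ω : Option K × K, (Fintype.card K : ℝ) ^ 2 * (EP E ω : ℝ) :=
          Finset.sum_le_sum fun ω _ => h1 ω
      _ = (Fintype.card K : ℝ) ^ 2 * ∑ ω : Option K × K, (EP E ω : ℝ) := by
          rw [Finset.mul_sum]
      _ = (Fintype.card K : ℝ) ^ 2 * (((Fintype.card K : ℝ) + 1) * (E.card : ℝ)) := by
          congr 1
          have h3 := sum_EP (K := K) E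
          have hcast : ∑ ω : Option K × K, (EP E ω : ℝ)
              = (((Fintype.card K + 1) * E.card : ℕ) : ℝ) := by
            rw [← h3]; push_cast; rfl
          rw [hcast]; push_cast; ring
  -- Step E : Fourier term
  have hE : ∀ l ∈ univ.erase (0 : K), ∑ ω : Option K × K, ‖Sf ψ E l ω‖ ^ 2
      ≤ 2 * (Fintype.card K : ℝ) * Nr ψ E l := by
    intro l hl
    have hl0 : l ≠ 0 := (Finset.mem_erase.mp hl).1
    have hid := S_id ψ E l
    have hre : ∑ ω : Option K × K, Complex.normSq (Sf ψ E l ω)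
        = (Fintype.card K : ℝ) * Nr ψ E l + (Qc ψ E l).re := by
      have h1 : ((∑ ω : Option K × K, Complex.normSq (Sf ψ E l ω) : ℝ) : ℂ)
          = (Fintype.card K : ℂ) * ((Nr ψ E l : ℝ) : ℂ) + Qc ψ E l := by
        push_cast
        rw [← hid]
        exact Finset.sum_congr rfl fun ω _ => (Complex.mul_conj _).symm
      have h2 := congrArg Complex.re h1
      simp only [Complex.ofReal_re, Complex.add_re, Complex.mul_re, Complex.natCast_re,
        Complex.natCast_im, Complex.ofReal_im, mul_zero, zero_mul, sub_zero] at h2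
      exact h2
    have hQ := Qc_bound ψ hψ E hl0
    have hre2 : (Qc ψ E l).re ≤ (Fintype.card K : ℝ) * Nr ψ E l :=
      (Complex.re_le_norm _).trans hQ
    have habs2 : ∑ ω : Option K × K, ‖Sf ψ E l ω‖ ^ 2
        = ∑ ω : Option K × K, Complex.normSq (Sf ψ E l ω) :=
      Finset.sum_congr rfl fun ω _ => Complex.sq_norm _
    rw [habs2, hre]
    linarith
  -- Step F : combine everything
  have hP := parseval ψ hψ E
  have hNr0 : ∀ l : K, 0 ≤ Nr ψ E l :=
    fun l => Finset.sum_nonneg fun v _ => Complex.normSq_nonneg _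
  have hE2 : ∑ l ∈ univ.erase (0 : K), ∑ ω : Option K × K, ‖Sf ψ E l ω‖ ^ 2
      ≤ 2 * (Fintype.card K : ℝ) * ((Fintype.card K : ℝ) * (E.card : ℝ)) := by
    calc ∑ l ∈ univ.erase (0 : K), ∑ ω : Option K × K, ‖Sf ψ E l ω‖ ^ 2
        ≤ ∑ l ∈ univ.erase (0 : K), 2 * (Fintype.card K : ℝ) * Nr ψ E l :=
          Finset.sum_le_sum hE
      _ = 2 * (Fintype.card K : ℝ) * ∑ l ∈ univ.erase (0 : K), Nr ψ E l := by
          rw [Finset.mul_sum]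
      _ ≤ 2 * (Fintype.card K : ℝ) * ∑ l : K, Nr ψ E l := by
          refine mul_le_mul_of_nonneg_left ?_ (by positivity)
          exact Finset.sum_le_sum_of_subset_of_nonneg (Finset.subset_univ _)
            (fun l _ _ => hNr0 l)
      _ = 2 * (Fintype.card K : ℝ) * ((Fintype.card K : ℝ) * (E.card : ℝ)) := by rw [hP]
  have hEcard0 : (0 : ℝ) ≤ (E.card : ℝ) := Nat.cast_nonneg _
  have hΩ0 : (0 : ℝ) ≤ (Ω.card : ℝ) := Nat.cast_nonneg _
  have htot : ((Fintype.card K : ℝ) * m) ^ 2 * (Ω.card : ℝ)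
      ≤ (Fintype.card K : ℝ) ^ 2 * ((6 * (Fintype.card K : ℝ) + 2) * (E.card : ℝ)) := by
    have h4 := hC
    have h5 : 2 * (Fintype.card K : ℝ) *
        (∑ l ∈ univ.erase (0 : K), ∑ ω : Option K × K, ‖Sf ψ E l ω‖ ^ 2)
        ≤ 2 * (Fintype.card K : ℝ) *
          (2 * (Fintype.card K : ℝ) * ((Fintype.card K : ℝ) * (E.card : ℝ))) :=
      mul_le_mul_of_nonneg_left hE2 (by positivity)
    nlinarith [hD]
  have hmain : (m : ℝ) ^ 2 * (Ω.card : ℝ)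
      ≤ (6 * (Fintype.card K : ℝ) + 2) * (E.card : ℝ) := by
    have h6 : (Fintype.card K : ℝ) ^ 2 * ((m : ℝ) ^ 2 * (Ω.card : ℝ))
        ≤ (Fintype.card K : ℝ) ^ 2 * ((6 * (Fintype.card K : ℝ) + 2) * (E.card : ℝ)) := by
      calc (Fintype.card K : ℝ) ^ 2 * ((m : ℝ) ^ 2 * (Ω.card : ℝ))
          = ((Fintype.card K : ℝ) * m) ^ 2 * (Ω.card : ℝ) := by ring
        _ ≤ _ := htot
    exact le_of_mul_le_mul_left h6 (by positivity)
  have h25 : (6 * (Fintype.card K : ℝ) + 2) * (E.card : ℝ)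
      ≤ 25 * (Fintype.card K : ℝ) * (E.card : ℝ) := by
    have hq1 : (1 : ℝ) ≤ (Fintype.card K : ℝ) := by exact_mod_cast hq0
    nlinarith
  rw [div_le_iff₀ (by positivity)]
  calc (m : ℝ) ^ 2 * (Ω.card : ℝ) ≤ 25 * (Fintype.card K : ℝ) * (E.card : ℝ) :=
        hmain.trans h25
    _ = (E.card : ℝ) * (25 * (Fintype.card K : ℝ)) := by ring
end
end

section
/- Let q be a prime power and let E ⊆ H_1(F_q) be a full-direction horizontal Heisenberg Kakeya set, i.e. for every ω ∈ D_1 there exists a horizontal line L ⊆ E with Dir(L) = ω. Then |E| ≥ q^3 / 25. Moreover, for M_E(ω) = max over horizontal lines L with Dir(L) = ω of |E ∩ L|, any set E ⊆ H_1(F_q) satisfies ∑_{ω ∈ D_1} M_E(ω)^2 ≤ 25 q |E|. -/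
/-!
`K` plays the role of the finite field `F_q` with `q = Fintype.card K` elements
(the cardinality of a finite field is automatically a prime power).
The Heisenberg group `H₁(F_q)` is identified with `K × K × K`.
The set `D₁` of non-vertical (refined) projective directions
`{[a : b : c] ∈ P²(F_q) : (a,b) ≠ (0,0)}` is identified with `Option K × K`:
`(some m, γ)` corresponds to `[1 : m : γ]` and `(none, γ)` to `[0 : 1 : γ]`
(every element of `D₁` has a unique such normal form).
-/

noncomputable section

open Finset

section HeisenbergKakeyaAux
set_option linter.unusedSectionVars false
variable {K : Type*} [Field K] [Fintype K] [DecidableEq K]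

lemma hk_orth {ψ : AddChar K ℂ} (hψ : ψ.IsPrimitive) (a : K) :
    ∑ ξ : K, ψ (ξ * a) = if a = 0 then (Fintype.card K : ℂ) else 0 := by
  rw [AddChar.sum_mulShift a hψ]; split <;> simp

lemma hk_mul_conj_term (ψ : AddChar K ℂ) (x y : ℂ) (u v : K) :
    (x * ψ u) * (starRingEnd ℂ) (y * ψ v) = x * (starRingEnd ℂ) y * ψ (u - v) := by
  rw [map_mul, ← AddChar.map_neg_eq_conj, sub_eq_add_neg, AddChar.map_add_eq_mul]
  ring

/-- generic 1-frequency Parseval -/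
lemma hk_key {ψ : AddChar K ℂ} (hψ : ψ.IsPrimitive) {ι : Type*} [Fintype ι] [DecidableEq ι]
    (a : ι → ℂ) (c : ι → K) (hc : Function.Injective c) :
    ∑ ξ : K, (∑ i, a i * ψ (ξ * c i)) * (starRingEnd ℂ) (∑ i, a i * ψ (ξ * c i)) =
      (Fintype.card K : ℂ) * ∑ i, a i * (starRingEnd ℂ) (a i) := by
  have step1 : ∀ ξ : K, (∑ i, a i * ψ (ξ * c i)) * (starRingEnd ℂ) (∑ i, a i * ψ (ξ * c i)) =
      ∑ i, ∑ j, a i * (starRingEnd ℂ) (a j) * ψ (ξ * (c i - c j)) := by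
    intro ξ
    rw [map_sum, Finset.sum_mul_sum]
    refine Finset.sum_congr rfl fun i _ => Finset.sum_congr rfl fun j _ => ?_
    rw [hk_mul_conj_term, ← mul_sub]
  calc ∑ ξ : K, (∑ i, a i * ψ (ξ * c i)) * (starRingEnd ℂ) (∑ i, a i * ψ (ξ * c i))
      = ∑ ξ : K, ∑ i, ∑ j, a i * (starRingEnd ℂ) (a j) * ψ (ξ * (c i - c j)) :=
        Finset.sum_congr rfl fun ξ _ => step1 ξ
    _ = ∑ i, ∑ j, a i * (starRingEnd ℂ) (a j) * ∑ ξ : K, ψ (ξ * (c i - c j)) := by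
        rw [Finset.sum_comm]
        refine Finset.sum_congr rfl fun i _ => ?_
        rw [Finset.sum_comm]
        exact Finset.sum_congr rfl fun j _ => (Finset.mul_sum _ _ _).symm
    _ = (Fintype.card K : ℂ) * ∑ i, a i * (starRingEnd ℂ) (a i) := by
        rw [Finset.mul_sum]
        refine Finset.sum_congr rfl fun i _ => ?_
        rw [Finset.sum_eq_single i]
        · rw [hk_orth hψ, if_pos (by simp), mul_comm]
        · intro j _ hj
          rw [hk_orth hψ, if_neg (fun h => hj (hc (sub_eq_zero.mp h)).symm), mul_zero]
        · simp

/-- generic 2-frequency Parseval -/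
lemma hk_key2 {ψ : AddChar K ℂ} (hψ : ψ.IsPrimitive) {ι : Type*} [Fintype ι] [DecidableEq ι]
    (a : ι → ℂ) (c d : ι → K) (hcd : ∀ i j, c i = c j → d i = d j → i = j) :
    ∑ ξ : K, ∑ η : K,
      (∑ i, a i * ψ (ξ * c i + η * d i)) * (starRingEnd ℂ) (∑ i, a i * ψ (ξ * c i + η * d i)) =
      ((Fintype.card K : ℂ))^2 * ∑ i, a i * (starRingEnd ℂ) (a i) := by
  have step1 : ∀ ξ η : K,
      (∑ i, a i * ψ (ξ * c i + η * d i)) * (starRingEnd ℂ) (∑ i, a i * ψ (ξ * c i + η * d i)) =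
      ∑ i, ∑ j, a i * (starRingEnd ℂ) (a j) * (ψ (ξ * (c i - c j)) * ψ (η * (d i - d j))) := by
    intro ξ η
    rw [map_sum, Finset.sum_mul_sum]
    refine Finset.sum_congr rfl fun i _ => Finset.sum_congr rfl fun j _ => ?_
    rw [hk_mul_conj_term, ← AddChar.map_add_eq_mul]
    congr 2
    ring
  calc ∑ ξ : K, ∑ η : K,
      (∑ i, a i * ψ (ξ * c i + η * d i)) * (starRingEnd ℂ) (∑ i, a i * ψ (ξ * c i + η * d i))
      = ∑ ξ : K, ∑ η : K, ∑ i, ∑ j,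
          a i * (starRingEnd ℂ) (a j) * (ψ (ξ * (c i - c j)) * ψ (η * (d i - d j))) :=
        Finset.sum_congr rfl fun ξ _ => Finset.sum_congr rfl fun η _ => step1 ξ η
    _ = ∑ i, ∑ j, a i * (starRingEnd ℂ) (a j) *
          ((∑ ξ : K, ψ (ξ * (c i - c j))) * (∑ η : K, ψ (η * (d i - d j)))) := by
        have swap : ∑ ξ : K, ∑ η : K, ∑ i, ∑ j,
            a i * (starRingEnd ℂ) (a j) * (ψ (ξ * (c i - c j)) * ψ (η * (d i - d j))) =
            ∑ i, ∑ j, ∑ ξ : K, ∑ η : K,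
            a i * (starRingEnd ℂ) (a j) * (ψ (ξ * (c i - c j)) * ψ (η * (d i - d j))) := by
          calc ∑ ξ : K, ∑ η : K, ∑ i, ∑ j,
              a i * (starRingEnd ℂ) (a j) * (ψ (ξ * (c i - c j)) * ψ (η * (d i - d j)))
              = ∑ ξ : K, ∑ i, ∑ η : K, ∑ j,
                a i * (starRingEnd ℂ) (a j) * (ψ (ξ * (c i - c j)) * ψ (η * (d i - d j))) :=
                Finset.sum_congr rfl fun ξ _ => Finset.sum_comm
            _ = ∑ i, ∑ ξ : K, ∑ η : K, ∑ j,
                a i * (starRingEnd ℂ) (a j) * (ψ (ξ * (c i - c j)) * ψ (η * (d i - d j))) :=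
                Finset.sum_comm
            _ = ∑ i, ∑ ξ : K, ∑ j, ∑ η : K,
                a i * (starRingEnd ℂ) (a j) * (ψ (ξ * (c i - c j)) * ψ (η * (d i - d j))) :=
                Finset.sum_congr rfl fun i _ => Finset.sum_congr rfl fun ξ _ =>
                  Finset.sum_comm
            _ = ∑ i, ∑ j, ∑ ξ : K, ∑ η : K,
                a i * (starRingEnd ℂ) (a j) * (ψ (ξ * (c i - c j)) * ψ (η * (d i - d j))) :=
                Finset.sum_congr rfl fun i _ => Finset.sum_comm
        rw [swap]
        refine Finset.sum_congr rfl fun i _ => Finset.sum_congr rfl fun j _ => ?_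
        rw [Finset.sum_mul_sum, Finset.mul_sum]
        exact Finset.sum_congr rfl fun ξ _ => (Finset.mul_sum _ _ _).symm
    _ = ((Fintype.card K : ℂ))^2 * ∑ i, a i * (starRingEnd ℂ) (a i) := by
        rw [Finset.mul_sum]
        refine Finset.sum_congr rfl fun i _ => ?_
        rw [Finset.sum_eq_single i]
        · rw [hk_orth hψ, hk_orth hψ, if_pos (by simp), if_pos (by simp)]
          push_cast; ring
        · intro j _ hj
          by_cases h1 : c i - c j = 0
          · rw [hk_orth hψ (d i - d j),
              if_neg (fun h2 => hj (hcd j i (sub_eq_zero.mp h1).symm (sub_eq_zero.mp h2).symm)),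
              mul_zero, mul_zero]
          · rw [hk_orth hψ (c i - c j), if_neg h1, zero_mul, mul_zero]
        · simp


/-- sum of `z * conj z` is the (real) sum of squared moduli -/
lemma hk_sum_conj {ι : Type*} [Fintype ι] (h : ι → ℂ) :
    ∑ i, h i * (starRingEnd ℂ) (h i) = ((∑ i, ‖h i‖ ^ 2 : ℝ) : ℂ) := by
  push_cast
  exact Finset.sum_congr rfl fun i _ => by
    rw [Complex.mul_conj]; norm_cast; rw [Complex.sq_norm]

/-- crude Cauchy-Schwarz for a sum -/
lemma hk_cs {ι : Type*} [Fintype ι] (h : ι → ℂ) :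
    ‖∑ i, h i‖ ^ 2 ≤ (Fintype.card ι : ℝ) * ∑ i, ‖h i‖ ^ 2 := by
  have h1 : ‖∑ i, h i‖ ≤ ∑ i, ‖h i‖ := norm_sum_le _ _
  have h2 : (‖∑ i, h i‖) ^ 2 ≤ (∑ i, ‖h i‖) ^ 2 :=
    pow_le_pow_left₀ (norm_nonneg _) h1 2
  refine h2.trans ?_
  have := Finset.sum_mul_sq_le_sq_mul_sq Finset.univ (fun _ : ι => (1:ℝ))
    (fun i => ‖h i‖)
  simpa [Finset.card_univ] using this

/-- real Cauchy-Schwarz in product form -/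
lemma hk_cs' {ι : Type*} [Fintype ι] (f g : ι → ℝ) :
    (∑ i, f i * g i) ^ 2 ≤ (∑ i, f i ^ 2) * ∑ i, g i ^ 2 :=
  Finset.sum_mul_sq_le_sq_mul_sq _ _ _

section Defs
variable (ψ : AddChar K ℂ) (F : K × K × K → ℂ)

/-- Fourier transform in the vertical variable. -/
def hkFT (ξ x y : K) : ℂ := ∑ t, F (x, y, t) * ψ (ξ * -t)

/-- The Fourier side of the line sum. -/
def hkB (ξ : K) (ω : Option K × K) : ℂ :=
  match ω.1 with
  | some m => ∑ s, hkFT ψ F ξ s (m * s - ω.2) * ψ (ξ * ω.2 * s)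
  | none   => ∑ s, hkFT ψ F ξ ω.2 s * ψ (ξ * ω.2 * s)

end Defs

lemma hk_inv_aux {ψ : AddChar K ℂ} (hψ : ψ.IsPrimitive) (G : K → K → ℂ) (γ τ : K) :
    ∑ ξ : K, ψ (ξ * τ) * ∑ s, (∑ t, G s t * ψ (ξ * -t)) * ψ (ξ * γ * s) =
    (Fintype.card K : ℂ) * ∑ s, G s (τ + γ * s) := by
  have orth : ∀ a : K, ∑ ξ : K, ψ (ξ * a) = if a = 0 then (Fintype.card K : ℂ) else 0 := by
    intro a; rw [AddChar.sum_mulShift a hψ]; split <;> simp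
  calc ∑ ξ : K, ψ (ξ * τ) * ∑ s, (∑ t, G s t * ψ (ξ * -t)) * ψ (ξ * γ * s)
      = ∑ ξ : K, ∑ s, ∑ t, G s t * ψ (ξ * (τ + γ * s - t)) := by
        refine Finset.sum_congr rfl fun ξ _ => ?_
        rw [Finset.mul_sum]
        refine Finset.sum_congr rfl fun s _ => ?_
        rw [Finset.sum_mul, Finset.mul_sum]
        refine Finset.sum_congr rfl fun t _ => ?_
        rw [mul_assoc (G s t), ← AddChar.map_add_eq_mul, ← mul_assoc, mul_comm (ψ (ξ * τ)),
          mul_assoc, ← AddChar.map_add_eq_mul]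
        congr 2
        ring
    _ = ∑ s, ∑ t, G s t * ∑ ξ : K, ψ (ξ * (τ + γ * s - t)) := by
        rw [Finset.sum_comm]
        refine Finset.sum_congr rfl fun s _ => ?_
        rw [Finset.sum_comm]
        exact Finset.sum_congr rfl fun t _ => (Finset.mul_sum _ _ _).symm
    _ = (Fintype.card K : ℂ) * ∑ s, G s (τ + γ * s) := by
        rw [Finset.mul_sum]
        refine Finset.sum_congr rfl fun s _ => ?_
        calc ∑ t, G s t * ∑ ξ : K, ψ (ξ * (τ + γ * s - t))
            = ∑ t, if t = τ + γ * s then G s t * (Fintype.card K : ℂ) else 0 := by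
              refine Finset.sum_congr rfl fun t _ => ?_
              rw [orth]
              by_cases h : t = τ + γ * s
              · rw [if_pos h, if_pos (by rw [h]; ring)]
              · rw [if_neg (fun hh => h (by linear_combination -hh)), mul_zero, if_neg h]
          _ = (Fintype.card K : ℂ) * G s (τ + γ * s) := by
              rw [Finset.sum_ite_eq' Finset.univ (τ + γ * s) (fun t => G s t * (Fintype.card K : ℂ))]
              simp [mul_comm]

-- C1: expansion of the pencil square sum
lemma hk_C1 (ψ : AddChar K ℂ) (ξ : K) (g : K → K → ℂ) (m : K) :
    ∑ γ : K, (∑ s, g s (m * s - γ) * ψ (ξ * γ * s)) *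
        (starRingEnd ℂ) (∑ s, g s (m * s - γ) * ψ (ξ * γ * s)) =
    ∑ s : K, ∑ s' : K, ∑ u : K,
      g s u * (starRingEnd ℂ) (g s' (m * (s' - s) + u)) * ψ (ξ * (m * s - u) * (s - s')) := by
  have step : ∀ γ : K, (∑ s, g s (m * s - γ) * ψ (ξ * γ * s)) *
      (starRingEnd ℂ) (∑ s, g s (m * s - γ) * ψ (ξ * γ * s)) =
      ∑ s : K, ∑ s' : K,
        g s (m * s - γ) * (starRingEnd ℂ) (g s' (m * s' - γ)) * ψ (ξ * γ * s - ξ * γ * s') := by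
    intro γ
    rw [map_sum, Finset.sum_mul_sum]
    exact Finset.sum_congr rfl fun s _ => Finset.sum_congr rfl fun s' _ =>
      hk_mul_conj_term ψ _ _ _ _
  calc ∑ γ : K, (∑ s, g s (m * s - γ) * ψ (ξ * γ * s)) *
        (starRingEnd ℂ) (∑ s, g s (m * s - γ) * ψ (ξ * γ * s))
      = ∑ γ : K, ∑ s : K, ∑ s' : K,
          g s (m * s - γ) * (starRingEnd ℂ) (g s' (m * s' - γ)) * ψ (ξ * γ * s - ξ * γ * s') :=
        Finset.sum_congr rfl fun γ _ => step γ
    _ = ∑ s : K, ∑ s' : K, ∑ γ : K,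
          g s (m * s - γ) * (starRingEnd ℂ) (g s' (m * s' - γ)) * ψ (ξ * γ * s - ξ * γ * s') := by
        rw [Finset.sum_comm]
        exact Finset.sum_congr rfl fun s _ => Finset.sum_comm
    _ = ∑ s : K, ∑ s' : K, ∑ u : K,
          g s u * (starRingEnd ℂ) (g s' (m * (s' - s) + u)) * ψ (ξ * (m * s - u) * (s - s')) := by
        refine Finset.sum_congr rfl fun s _ => Finset.sum_congr rfl fun s' _ => ?_
        refine Fintype.sum_equiv (Equiv.subLeft (m * s)) _ _ fun γ => ?_
        simp only [Equiv.subLeft_apply]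
        rw [show m * (s' - s) + (m * s - γ) = m * s' - γ from by ring,
          show m * s - (m * s - γ) = γ from by ring,
          show ξ * γ * (s - s') = ξ * γ * s - ξ * γ * s' from by ring]

-- the diagonal of I
lemma hk_C2 (ψ : AddChar K ℂ) (ξ : K) (g : K → K → ℂ) (s : K) :
    ∑ m : K, ∑ u : K,
      g s u * (starRingEnd ℂ) (g s (m * (s - s) + u)) * ψ (ξ * (m * s - u) * (s - s)) =
    (Fintype.card K : ℂ) * ∑ u : K, g s u * (starRingEnd ℂ) (g s u) := by
  simp [sub_self, mul_zero, AddChar.map_zero_eq_one, zero_add, Finset.sum_const, card_univ]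

-- off-diagonal of I equals J
lemma hk_C3 (ψ : AddChar K ℂ) (ξ : K) (g : K → K → ℂ) {s s' : K} (hss : s' ≠ s) :
    ∑ m : K, ∑ u : K,
      g s u * (starRingEnd ℂ) (g s' (m * (s' - s) + u)) * ψ (ξ * (m * s - u) * (s - s')) =
    ∑ u : K, ∑ v : K, g s u * (starRingEnd ℂ) (g s' v) * ψ (ξ * (u * s' - s * v)) := by
  rw [Finset.sum_comm]
  refine Finset.sum_congr rfl fun u _ => ?_
  have hne : s' - s ≠ 0 := sub_ne_zero_of_ne hss
  refine Fintype.sum_equiv ((Equiv.mulRight₀ (s' - s) hne).trans (Equiv.addRight u)) _ _ fun m => ?_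
  have h0 : (Equiv.trans (Equiv.mulRight₀ (s' - s) hne) (Equiv.addRight u)) m
      = m * (s' - s) + u := rfl
  rw [h0,
    show ξ * (u * s' - s * (m * (s' - s) + u)) = ξ * (m * s - u) * (s - s') from by ring]

-- the diagonal of J as a square
lemma hk_C4 (ψ : AddChar K ℂ) (ξ : K) (g : K → K → ℂ) (s : K) :
    ∑ u : K, ∑ v : K, g s u * (starRingEnd ℂ) (g s v) * ψ (ξ * (u * s - s * v)) =
    (∑ u : K, g s u * ψ (ξ * s * u)) * (starRingEnd ℂ) (∑ v : K, g s v * ψ (ξ * s * v)) := by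
  rw [map_sum, Finset.sum_mul_sum]
  refine Finset.sum_congr rfl fun u _ => Finset.sum_congr rfl fun v _ => ?_
  rw [hk_mul_conj_term, show ξ * s * u - ξ * s * v = ξ * (u * s - s * v) from by ring]

section Main
variable (ψ : AddChar K ℂ) (ξ : K) (g : K → K → ℂ)

def hkZ (m γ : K) : ℂ := ∑ s, g s (m * s - γ) * ψ (ξ * γ * s)

def hkI (s s' : K) : ℂ :=
  ∑ m : K, ∑ u : K,
    g s u * (starRingEnd ℂ) (g s' (m * (s' - s) + u)) * ψ (ξ * (m * s - u) * (s - s'))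

def hkJ (s s' : K) : ℂ :=
  ∑ u : K, ∑ v : K, g s u * (starRingEnd ℂ) (g s' v) * ψ (ξ * (u * s' - s * v))

def hkH (s u : K) : ℂ := ∑ x : K, ∑ y : K, g x y * ψ (ξ * (s * y - u * x))

lemma hk_Isum :
    ∑ m : K, ∑ γ : K, hkZ ψ ξ g m γ * (starRingEnd ℂ) (hkZ ψ ξ g m γ) =
    ∑ s : K, ∑ s' : K, hkI ψ ξ g s s' := by
  calc ∑ m : K, ∑ γ : K, hkZ ψ ξ g m γ * (starRingEnd ℂ) (hkZ ψ ξ g m γ)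
      = ∑ m : K, ∑ s : K, ∑ s' : K, ∑ u : K,
          g s u * (starRingEnd ℂ) (g s' (m * (s' - s) + u)) * ψ (ξ * (m * s - u) * (s - s')) :=
        Finset.sum_congr rfl fun m _ => hk_C1 ψ ξ g m
    _ = ∑ s : K, ∑ m : K, ∑ s' : K, ∑ u : K,
          g s u * (starRingEnd ℂ) (g s' (m * (s' - s) + u)) * ψ (ξ * (m * s - u) * (s - s')) :=
        Finset.sum_comm
    _ = ∑ s : K, ∑ s' : K, hkI ψ ξ g s s' :=
        Finset.sum_congr rfl fun s _ => Finset.sum_comm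

lemma hk_Id :
    ∑ m : K, ∑ γ : K, hkZ ψ ξ g m γ * (starRingEnd ℂ) (hkZ ψ ξ g m γ)
      + ∑ s : K, hkJ ψ ξ g s s =
    (∑ s : K, ∑ s' : K, hkJ ψ ξ g s s')
      + (Fintype.card K : ℂ) * ∑ s : K, ∑ u : K, g s u * (starRingEnd ℂ) (g s u) := by
  rw [hk_Isum, Finset.mul_sum, ← Finset.sum_add_distrib, ← Finset.sum_add_distrib]
  refine Finset.sum_congr rfl fun s _ => ?_
  rw [← Finset.add_sum_erase _ (hkI ψ ξ g s) (mem_univ s),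
    ← Finset.add_sum_erase _ (hkJ ψ ξ g s) (mem_univ s)]
  have hIs : hkI ψ ξ g s s = (Fintype.card K : ℂ) *
      ∑ u : K, g s u * (starRingEnd ℂ) (g s u) := hk_C2 ψ ξ g s
  have hoff : ∑ s' ∈ Finset.univ.erase s, hkI ψ ξ g s s'
      = ∑ s' ∈ Finset.univ.erase s, hkJ ψ ξ g s s' :=
    Finset.sum_congr rfl fun s' hs' => hk_C3 ψ ξ g (Finset.ne_of_mem_erase hs')
  rw [hIs, hoff]
  ring

lemma hk_Jdiag (s : K) :
    hkJ ψ ξ g s s = ((‖∑ u : K, g s u * ψ (ξ * s * u)‖ ^ 2 : ℝ) : ℂ) := by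
  rw [hkJ, hk_C4, Complex.mul_conj]
  norm_cast
  rw [Complex.sq_norm]

lemma hk_Wform :
    ∑ s : K, ∑ s' : K, hkJ ψ ξ g s s' =
    ∑ s : K, ∑ u : K, g s u * (starRingEnd ℂ) (hkH ψ ξ g s u) := by
  refine Finset.sum_congr rfl fun s _ => ?_
  have hconj : ∀ u : K, (starRingEnd ℂ) (hkH ψ ξ g s u) =
      ∑ s' : K, ∑ v : K, (starRingEnd ℂ) (g s' v) * ψ (ξ * (u * s' - s * v)) := by
    intro u
    rw [hkH, map_sum]
    refine Finset.sum_congr rfl fun x _ => ?_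
    rw [map_sum]
    refine Finset.sum_congr rfl fun y _ => ?_
    rw [map_mul, ← AddChar.map_neg_eq_conj,
      show -(ξ * (s * y - u * x)) = ξ * (u * x - s * y) from by ring]
  calc ∑ s' : K, hkJ ψ ξ g s s'
      = ∑ u : K, ∑ s' : K, ∑ v : K,
          g s u * ((starRingEnd ℂ) (g s' v) * ψ (ξ * (u * s' - s * v))) := by
        rw [show (∑ s' : K, hkJ ψ ξ g s s') = ∑ s' : K, ∑ u : K, ∑ v : K,
            g s u * ((starRingEnd ℂ) (g s' v) * ψ (ξ * (u * s' - s * v))) from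
          Finset.sum_congr rfl fun s' _ => Finset.sum_congr rfl fun u _ =>
            Finset.sum_congr rfl fun v _ => by rw [mul_assoc]]
        exact Finset.sum_comm
    _ = ∑ u : K, g s u * (starRingEnd ℂ) (hkH ψ ξ g s u) := by
        refine Finset.sum_congr rfl fun u _ => ?_
        rw [hconj u, Finset.mul_sum]
        exact Finset.sum_congr rfl fun s' _ => (Finset.mul_sum _ _ _).symm

lemma hk_ofReal_sum {ι : Type*} [Fintype ι] (f : ι → ℝ) :
    ((∑ i, f i : ℝ) : ℂ) = ∑ i, ((f i : ℝ) : ℂ) := by push_cast; rfl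

lemma hk_prod_sum {M : Type*} [AddCommMonoid M] (f : K → K → M) :
    ∑ p : K × K, f p.1 p.2 = ∑ x : K, ∑ y : K, f x y := by
  rw [Fintype.sum_prod_type]

lemma hk_Hpars {ψ : AddChar K ℂ} (hψ : ψ.IsPrimitive) {ξ : K} (hξ : ξ ≠ 0) (g : K → K → ℂ) :
    ∑ s : K, ∑ u : K, ‖hkH ψ ξ g s u‖ ^ 2 =
    (Fintype.card K : ℝ) ^ 2 * ∑ x : K, ∑ y : K, ‖g x y‖ ^ 2 := by
  have hinj : ∀ i j : K × K, ξ * i.2 = ξ * j.2 → -(ξ * i.1) = -(ξ * j.1) → i = j := by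
    intro i j h1 h2
    have e2 : i.2 = j.2 := mul_left_cancel₀ hξ h1
    have e1 : i.1 = j.1 := mul_left_cancel₀ hξ (neg_injective h2)
    exact Prod.ext e1 e2
  have key := hk_key2 hψ (fun p : K × K => g p.1 p.2) (fun p => ξ * p.2) (fun p => -(ξ * p.1)) hinj
  have hH : ∀ s u : K, hkH ψ ξ g s u =
      ∑ p : K × K, g p.1 p.2 * ψ (s * (ξ * p.2) + u * -(ξ * p.1)) := by
    intro s u
    rw [hkH, Fintype.sum_prod_type]
    refine Finset.sum_congr rfl fun x _ => Finset.sum_congr rfl fun y _ => ?_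
    rw [show s * (ξ * y) + u * -(ξ * x) = ξ * (s * y - u * x) from by ring]
  have lhs_c : ∑ s : K, ∑ u : K,
      (∑ p : K × K, g p.1 p.2 * ψ (s * (ξ * p.2) + u * -(ξ * p.1))) *
      (starRingEnd ℂ) (∑ p : K × K, g p.1 p.2 * ψ (s * (ξ * p.2) + u * -(ξ * p.1))) =
      ((∑ s : K, ∑ u : K, ‖hkH ψ ξ g s u‖ ^ 2 : ℝ) : ℂ) := by
    rw [hk_ofReal_sum]
    refine Finset.sum_congr rfl fun s _ => ?_
    rw [← hk_sum_conj (fun u => hkH ψ ξ g s u)]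
    refine Finset.sum_congr rfl fun u _ => by rw [← hH s u]
  have rhs_c : (Fintype.card K : ℂ) ^ 2 *
      ∑ p : K × K, g p.1 p.2 * (starRingEnd ℂ) (g p.1 p.2) =
      (((Fintype.card K : ℝ) ^ 2 * ∑ x : K, ∑ y : K, ‖g x y‖ ^ 2 : ℝ) : ℂ) := by
    rw [hk_sum_conj (fun p : K × K => g p.1 p.2),
      hk_prod_sum (fun x y => ‖g x y‖ ^ 2)]
    push_cast
    ring
  rw [lhs_c, rhs_c] at key
  exact_mod_cast key

lemma hk_Wabs {ψ : AddChar K ℂ} (hψ : ψ.IsPrimitive) {ξ : K} (hξ : ξ ≠ 0) (g : K → K → ℂ) :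
    ‖∑ s : K, ∑ s' : K, hkJ ψ ξ g s s'‖ ≤
    (Fintype.card K : ℝ) * ∑ x : K, ∑ y : K, ‖g x y‖ ^ 2 := by
  set ng := ∑ x : K, ∑ y : K, ‖g x y‖ ^ 2 with hng
  have hng0 : 0 ≤ ng := Finset.sum_nonneg fun x _ => Finset.sum_nonneg fun y _ => sq_nonneg _
  rw [hk_Wform]
  have tri : ‖∑ s : K, ∑ u : K, g s u * (starRingEnd ℂ) (hkH ψ ξ g s u)‖ ≤
      ∑ s : K, ∑ u : K, ‖g s u‖ * ‖hkH ψ ξ g s u‖ := by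
    refine (norm_sum_le _ _).trans (Finset.sum_le_sum fun s _ => ?_)
    refine (norm_sum_le _ _).trans (Finset.sum_le_sum fun u _ => ?_)
    rw [norm_mul, Complex.norm_conj]
  refine tri.trans ?_
  have cs : (∑ p : K × K, ‖g p.1 p.2‖ * ‖hkH ψ ξ g p.1 p.2‖) ^ 2 ≤
      (∑ p : K × K, ‖g p.1 p.2‖ ^ 2) *
      ∑ p : K × K, ‖hkH ψ ξ g p.1 p.2‖ ^ 2 := hk_cs' _ _
  rw [hk_prod_sum (fun s u => ‖g s u‖ ^ 2),
    hk_prod_sum (fun s u => ‖hkH ψ ξ g s u‖ ^ 2),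
    hk_Hpars hψ hξ g] at cs
  have hsum_eq : ∑ s : K, ∑ u : K, ‖g s u‖ * ‖hkH ψ ξ g s u‖ =
      ∑ p : K × K, ‖g p.1 p.2‖ * ‖hkH ψ ξ g p.1 p.2‖ :=
    (hk_prod_sum (fun s u => ‖g s u‖ * ‖hkH ψ ξ g s u‖)).symm
  rw [hsum_eq]
  have h2 : (∑ p : K × K, ‖g p.1 p.2‖ * ‖hkH ψ ξ g p.1 p.2‖) ^ 2 ≤
      ((Fintype.card K : ℝ) * ng) ^ 2 := by
    refine cs.trans (le_of_eq ?_)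
    ring
  have h3 : 0 ≤ ∑ p : K × K, ‖g p.1 p.2‖ * ‖hkH ψ ξ g p.1 p.2‖ :=
    Finset.sum_nonneg fun p _ => mul_nonneg (norm_nonneg _) (norm_nonneg _)
  have h4 : 0 ≤ (Fintype.card K : ℝ) * ng :=
    mul_nonneg (Nat.cast_nonneg _) hng0
  nlinarith [h2, h3, h4]

lemma hk_lemA {ψ : AddChar K ℂ} (hψ : ψ.IsPrimitive) {ξ : K} (hξ : ξ ≠ 0) (g : K → K → ℂ) :
    ∑ m : K, ∑ γ : K, ‖hkZ ψ ξ g m γ‖ ^ 2 ≤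
    2 * (Fintype.card K : ℝ) * ∑ x : K, ∑ y : K, ‖g x y‖ ^ 2 := by
  set T := ∑ m : K, ∑ γ : K, ‖hkZ ψ ξ g m γ‖ ^ 2 with hT
  set D := ∑ s : K, ‖∑ u : K, g s u * ψ (ξ * s * u)‖ ^ 2 with hD
  set ng := ∑ x : K, ∑ y : K, ‖g x y‖ ^ 2 with hng
  have hTc : ∑ m : K, ∑ γ : K, hkZ ψ ξ g m γ * (starRingEnd ℂ) (hkZ ψ ξ g m γ) = ((T : ℝ) : ℂ) := by
    rw [hT, hk_ofReal_sum]
    exact Finset.sum_congr rfl fun m _ => (hk_sum_conj (fun γ => hkZ ψ ξ g m γ))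
  have hDc : ∑ s : K, hkJ ψ ξ g s s = ((D : ℝ) : ℂ) := by
    rw [hD, hk_ofReal_sum]
    exact Finset.sum_congr rfl fun s _ => hk_Jdiag ψ ξ g s
  have hgc : ∑ s : K, ∑ u : K, g s u * (starRingEnd ℂ) (g s u) = ((ng : ℝ) : ℂ) := by
    rw [hng, hk_ofReal_sum]
    exact Finset.sum_congr rfl fun s _ => hk_sum_conj (fun u => g s u)
  have hid := hk_Id ψ ξ g
  rw [hTc, hDc, hgc] at hid
  have hW : ∑ s : K, ∑ s' : K, hkJ ψ ξ g s s' = ((T + D - (Fintype.card K : ℝ) * ng : ℝ) : ℂ) := by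
    push_cast
    linear_combination -hid
  have habs := hk_Wabs hψ hξ g
  rw [hW, Complex.norm_real, Real.norm_eq_abs] at habs
  have hD0 : 0 ≤ D := Finset.sum_nonneg fun s _ => sq_nonneg _
  have := (abs_le.mp habs).2
  linarith

end Main

lemma hk_cs_fin {ι : Type*} (s : Finset ι) (f : ι → ℝ) :
    (∑ i ∈ s, f i) ^ 2 ≤ (s.card : ℝ) * ∑ i ∈ s, f i ^ 2 := by
  have := Finset.sum_mul_sq_le_sq_mul_sq s (fun _ => (1:ℝ)) f
  simpa using this

lemma hk_prod3 {M : Type*} [AddCommMonoid M] (f : K → K → K → M) :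
    ∑ p : K × K × K, f p.1 p.2.1 p.2.2 = ∑ x : K, ∑ y : K, ∑ t : K, f x y t := by
  rw [Fintype.sum_prod_type]
  exact Finset.sum_congr rfl fun x _ => Fintype.sum_prod_type _

lemma hk_reindex2 (m : K) (f : K → K → ℝ) :
    ∑ γ : K, ∑ s : K, f s (m * s - γ) = ∑ x : K, ∑ y : K, f x y := by
  rw [Finset.sum_comm]
  exact Finset.sum_congr rfl fun s _ =>
    Fintype.sum_equiv (Equiv.subLeft (m * s)) _ _ fun γ => rfl

section Assembly
variable (ψ : AddChar K ℂ) (F : K × K × K → ℂ)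

lemma hk_abs_psi (x : K) : ‖ψ x‖ = 1 := by
  exact ψ.norm_apply x

lemma hk_crude_some (ξ m : K) :
    ∑ γ : K, ‖hkB ψ F ξ (some m, γ)‖ ^ 2 ≤
    (Fintype.card K : ℝ) * ∑ x : K, ∑ y : K, ‖hkFT ψ F ξ x y‖ ^ 2 := by
  have h1 : ∀ γ : K, ‖hkB ψ F ξ (some m, γ)‖ ^ 2 ≤
      (Fintype.card K : ℝ) * ∑ s : K, ‖hkFT ψ F ξ s (m * s - γ)‖ ^ 2 := by
    intro γ
    have h0 := hk_cs (fun s : K => hkFT ψ F ξ s (m * s - γ) * ψ (ξ * γ * s))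
    simp only [norm_mul, hk_abs_psi, mul_one] at h0
    exact h0
  calc ∑ γ : K, ‖hkB ψ F ξ (some m, γ)‖ ^ 2
      ≤ ∑ γ : K, (Fintype.card K : ℝ) * ∑ s : K, ‖hkFT ψ F ξ s (m * s - γ)‖ ^ 2 :=
        Finset.sum_le_sum fun γ _ => h1 γ
    _ = (Fintype.card K : ℝ) * ∑ x : K, ∑ y : K, ‖hkFT ψ F ξ x y‖ ^ 2 := by
        rw [← Finset.mul_sum, hk_reindex2 m (fun x y => ‖hkFT ψ F ξ x y‖ ^ 2)]

lemma hk_crude_none (ξ : K) :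
    ∑ γ : K, ‖hkB ψ F ξ (none, γ)‖ ^ 2 ≤
    (Fintype.card K : ℝ) * ∑ x : K, ∑ y : K, ‖hkFT ψ F ξ x y‖ ^ 2 := by
  have h1 : ∀ γ : K, ‖hkB ψ F ξ (none, γ)‖ ^ 2 ≤
      (Fintype.card K : ℝ) * ∑ s : K, ‖hkFT ψ F ξ γ s‖ ^ 2 := by
    intro γ
    have h0 := hk_cs (fun s : K => hkFT ψ F ξ γ s * ψ (ξ * γ * s))
    simp only [norm_mul, hk_abs_psi, mul_one] at h0
    exact h0
  calc ∑ γ : K, ‖hkB ψ F ξ (none, γ)‖ ^ 2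
      ≤ ∑ γ : K, (Fintype.card K : ℝ) * ∑ s : K, ‖hkFT ψ F ξ γ s‖ ^ 2 :=
        Finset.sum_le_sum fun γ _ => h1 γ
    _ = (Fintype.card K : ℝ) * ∑ x : K, ∑ y : K, ‖hkFT ψ F ξ x y‖ ^ 2 := by
        rw [← Finset.mul_sum]

lemma hk_sum_omega (f : Option K × K → ℝ) :
    ∑ ω : Option K × K, f ω = ∑ γ : K, f (none, γ) + ∑ m : K, ∑ γ : K, f (some m, γ) := by
  rw [Fintype.sum_prod_type, Fintype.sum_option]

lemma hk_S0 :
    ∑ ω : Option K × K, ‖hkB ψ F 0 ω‖ ^ 2 ≤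
    ((Fintype.card K : ℝ) + 1) * (Fintype.card K : ℝ) *
      ∑ x : K, ∑ y : K, ‖hkFT ψ F 0 x y‖ ^ 2 := by
  rw [hk_sum_omega]
  have h2 : ∑ m : K, ∑ γ : K, ‖hkB ψ F 0 (some m, γ)‖ ^ 2 ≤
      (Fintype.card K : ℝ) * ((Fintype.card K : ℝ) *
        ∑ x : K, ∑ y : K, ‖hkFT ψ F 0 x y‖ ^ 2) := by
    calc ∑ m : K, ∑ γ : K, ‖hkB ψ F 0 (some m, γ)‖ ^ 2
        ≤ ∑ _m : K, (Fintype.card K : ℝ) *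
            ∑ x : K, ∑ y : K, ‖hkFT ψ F 0 x y‖ ^ 2 :=
          Finset.sum_le_sum fun m _ => hk_crude_some ψ F 0 m
      _ = (Fintype.card K : ℝ) * ((Fintype.card K : ℝ) *
            ∑ x : K, ∑ y : K, ‖hkFT ψ F 0 x y‖ ^ 2) := by
          rw [Finset.sum_const, card_univ, nsmul_eq_mul]
  have h1 := hk_crude_none ψ F 0
  nlinarith [h1, h2]

lemma hk_Sxi {ξ : K} (hψ : ψ.IsPrimitive) (hξ : ξ ≠ 0) :
    ∑ ω : Option K × K, ‖hkB ψ F ξ ω‖ ^ 2 ≤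
    3 * (Fintype.card K : ℝ) * ∑ x : K, ∑ y : K, ‖hkFT ψ F ξ x y‖ ^ 2 := by
  rw [hk_sum_omega]
  have h1 := hk_crude_none ψ F ξ
  have h2 : ∑ m : K, ∑ γ : K, ‖hkB ψ F ξ (some m, γ)‖ ^ 2 ≤
      2 * (Fintype.card K : ℝ) * ∑ x : K, ∑ y : K, ‖hkFT ψ F ξ x y‖ ^ 2 :=
    hk_lemA hψ hξ (fun x y => hkFT ψ F ξ x y)
  nlinarith [h1, h2]

lemma hk_FT_crude (ξ : K) :
    ∑ x : K, ∑ y : K, ‖hkFT ψ F ξ x y‖ ^ 2 ≤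
    (Fintype.card K : ℝ) * ∑ p : K × K × K, ‖F p‖ ^ 2 := by
  rw [hk_prod3 (fun x y t => ‖F (x, y, t)‖ ^ 2), Finset.mul_sum]
  refine Finset.sum_le_sum fun x _ => ?_
  rw [Finset.mul_sum]
  refine Finset.sum_le_sum fun y _ => ?_
  have h0 := hk_cs (fun t : K => F (x, y, t) * ψ (ξ * -t))
  simp only [norm_mul, hk_abs_psi, mul_one] at h0
  exact h0

lemma hk_parsT {ψ : AddChar K ℂ} (hψ : ψ.IsPrimitive) (F : K × K × K → ℂ) :
    ∑ ξ : K, ∑ x : K, ∑ y : K, ‖hkFT ψ F ξ x y‖ ^ 2 =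
    (Fintype.card K : ℝ) * ∑ p : K × K × K, ‖F p‖ ^ 2 := by
  have hxy : ∀ x y : K, ∑ ξ : K, ‖hkFT ψ F ξ x y‖ ^ 2 =
      (Fintype.card K : ℝ) * ∑ t : K, ‖F (x, y, t)‖ ^ 2 := by
    intro x y
    have key := hk_key hψ (fun t => F (x, y, t)) (fun t => -t) neg_injective
    have lhs_c : ∑ ξ : K, (∑ t, F (x, y, t) * ψ (ξ * -t)) *
        (starRingEnd ℂ) (∑ t, F (x, y, t) * ψ (ξ * -t)) =
        ((∑ ξ : K, ‖hkFT ψ F ξ x y‖ ^ 2 : ℝ) : ℂ) :=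
      hk_sum_conj (fun ξ : K => ∑ t, F (x, y, t) * ψ (ξ * -t))
    rw [lhs_c, hk_sum_conj (fun t => F (x, y, t))] at key
    exact_mod_cast key
  calc ∑ ξ : K, ∑ x : K, ∑ y : K, ‖hkFT ψ F ξ x y‖ ^ 2
      = ∑ x : K, ∑ y : K, ∑ ξ : K, ‖hkFT ψ F ξ x y‖ ^ 2 := by
        rw [Finset.sum_comm]
        exact Finset.sum_congr rfl fun x _ => Finset.sum_comm
    _ = ∑ x : K, ∑ y : K, (Fintype.card K : ℝ) * ∑ t : K, ‖F (x, y, t)‖ ^ 2 :=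
        Finset.sum_congr rfl fun x _ => Finset.sum_congr rfl fun y _ => hxy x y
    _ = (Fintype.card K : ℝ) * ∑ p : K × K × K, ‖F p‖ ^ 2 := by
        rw [hk_prod3 (fun x y t => ‖F (x, y, t)‖ ^ 2), Finset.mul_sum]
        exact Finset.sum_congr rfl fun x _ => (Finset.mul_sum _ _ _).symm
end Assembly

lemma hk_inv {ψ : AddChar K ℂ} (hψ : ψ.IsPrimitive) (F : K × K × K → ℂ)
    (ω : Option K × K) (τ : K) :
    (Fintype.card K : ℂ) * ∑ s, F (lineRd ω τ s) = ∑ ξ : K, ψ (ξ * τ) * hkB ψ F ξ ω := by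
  obtain ⟨o, γ⟩ := ω
  cases o with
  | none => exact (hk_inv_aux hψ (fun s t => F (γ, s, t)) γ τ).symm
  | some m => exact (hk_inv_aux hψ (fun s t => F (s, m * s - γ, t)) γ τ).symm

lemma hk_absA {ψ : AddChar K ℂ} (hψ : ψ.IsPrimitive) (F : K × K × K → ℂ)
    (ω : Option K × K) (τ : K) :
    (Fintype.card K : ℝ) * ‖∑ s, F (lineRd ω τ s)‖ ≤
    ∑ ξ : K, ‖hkB ψ F ξ ω‖ := by
  have h := congrArg norm (hk_inv hψ F ω τ)
  rw [norm_mul, Complex.norm_natCast] at h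
  rw [h]
  refine (norm_sum_le _ _).trans (le_of_eq ?_)
  exact Finset.sum_congr rfl fun ξ _ => by rw [norm_mul, hk_abs_psi, one_mul]

lemma hk_main {ψ : AddChar K ℂ} (hψ : ψ.IsPrimitive) (F : K × K × K → ℂ)
    (σ : Option K × K → K) :
    ∑ ω : Option K × K, ‖∑ s, F (lineRd ω (σ ω) s)‖ ^ 2 ≤
    25 * (Fintype.card K : ℝ) * ∑ p : K × K × K, ‖F p‖ ^ 2 := by
  set q : ℝ := (Fintype.card K : ℝ) with hq
  have hq1 : 1 ≤ q := by
    rw [hq]; exact_mod_cast Fintype.card_pos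
  have hq0 : 0 ≤ q := by linarith
  set nF := ∑ p : K × K × K, ‖F p‖ ^ 2 with hnF
  have hnF0 : 0 ≤ nF := Finset.sum_nonneg fun p _ => sq_nonneg _
  have key : ∀ ω : Option K × K,
      q ^ 2 * ‖∑ s, F (lineRd ω (σ ω) s)‖ ^ 2 ≤
      2 * ‖hkB ψ F 0 ω‖ ^ 2 +
        2 * q * ∑ ξ ∈ Finset.univ.erase 0, ‖hkB ψ F ξ ω‖ ^ 2 := by
    intro ω
    have h1 := hk_absA hψ F ω (σ ω)
    have hsplit : ∑ ξ : K, ‖hkB ψ F ξ ω‖ =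
        ‖hkB ψ F 0 ω‖ + ∑ ξ ∈ Finset.univ.erase 0, ‖hkB ψ F ξ ω‖ :=
      (Finset.add_sum_erase _ _ (mem_univ 0)).symm
    rw [hsplit] at h1
    set A := ‖∑ s, F (lineRd ω (σ ω) s)‖ with hA
    set B0 := ‖hkB ψ F 0 ω‖ with hB0
    set S := ∑ ξ ∈ Finset.univ.erase 0, ‖hkB ψ F ξ ω‖ with hS
    set SQ := ∑ ξ ∈ Finset.univ.erase 0, ‖hkB ψ F ξ ω‖ ^ 2 with hSQ
    have hA0 : 0 ≤ A := norm_nonneg _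
    have hB00 : 0 ≤ B0 := norm_nonneg _
    have hS0 : 0 ≤ S := Finset.sum_nonneg fun ξ _ => norm_nonneg _
    have hSQ0 : 0 ≤ SQ := Finset.sum_nonneg fun ξ _ => sq_nonneg _
    have e1 : (q * A) ^ 2 ≤ (B0 + S) ^ 2 :=
      pow_le_pow_left₀ (mul_nonneg hq0 hA0) h1 2
    have e3 : S ^ 2 ≤ ((Finset.univ.erase (0:K)).card : ℝ) * SQ := hk_cs_fin _ _
    have hcard : ((Finset.univ.erase (0:K)).card : ℝ) ≤ q := by
      rw [Finset.card_erase_of_mem (mem_univ 0), card_univ, hq]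
      exact_mod_cast Nat.sub_le _ _
    have e4 : S ^ 2 ≤ q * SQ := e3.trans (mul_le_mul_of_nonneg_right hcard hSQ0)
    have e5 : (q * A) ^ 2 = q ^ 2 * A ^ 2 := by ring
    nlinarith [sq_nonneg (B0 - S)]
  have hsum := Finset.sum_le_sum fun ω (_ : ω ∈ Finset.univ) => key ω
  rw [← Finset.mul_sum, Finset.sum_add_distrib, ← Finset.mul_sum, ← Finset.mul_sum] at hsum
  -- bound the two pieces
  have hb0 : ∑ ω : Option K × K, ‖hkB ψ F 0 ω‖ ^ 2 ≤ (q + 1) * q * (q * nF) := by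
    refine (hk_S0 ψ F).trans ?_
    have := hk_FT_crude ψ F 0
    have hpos : (0:ℝ) ≤ (q + 1) * q := by nlinarith
    exact mul_le_mul_of_nonneg_left this hpos
  have hswap : ∑ ω : Option K × K, ∑ ξ ∈ Finset.univ.erase 0,
      ‖hkB ψ F ξ ω‖ ^ 2 =
      ∑ ξ ∈ Finset.univ.erase 0, ∑ ω : Option K × K, ‖hkB ψ F ξ ω‖ ^ 2 :=
    Finset.sum_comm
  have hbxi : ∑ ξ ∈ Finset.univ.erase 0, ∑ ω : Option K × K,
      ‖hkB ψ F ξ ω‖ ^ 2 ≤ 3 * q * (q * nF) := by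
    have step1 : ∀ ξ ∈ Finset.univ.erase (0:K),
        ∑ ω : Option K × K, ‖hkB ψ F ξ ω‖ ^ 2 ≤
        3 * q * ∑ x : K, ∑ y : K, ‖hkFT ψ F ξ x y‖ ^ 2 := fun ξ hξ =>
      hk_Sxi ψ F hψ (Finset.ne_of_mem_erase hξ)
    refine (Finset.sum_le_sum step1).trans ?_
    rw [← Finset.mul_sum]
    have step2 : ∑ ξ ∈ Finset.univ.erase 0, ∑ x : K, ∑ y : K,
        ‖hkFT ψ F ξ x y‖ ^ 2 ≤ q * nF := by
      have hsub : ∑ ξ ∈ Finset.univ.erase 0, ∑ x : K, ∑ y : K,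
          ‖hkFT ψ F ξ x y‖ ^ 2 ≤
          ∑ ξ : K, ∑ x : K, ∑ y : K, ‖hkFT ψ F ξ x y‖ ^ 2 :=
        Finset.sum_le_sum_of_subset_of_nonneg (Finset.subset_univ _)
          (fun ξ _ _ => Finset.sum_nonneg fun x _ => Finset.sum_nonneg fun y _ => sq_nonneg _)
      rw [hk_parsT hψ F] at hsub
      exact hsub
    have h3q : (0:ℝ) ≤ 3 * q := by linarith
    exact mul_le_mul_of_nonneg_left step2 h3q
  rw [hswap] at hsum
  have final : q ^ 2 * ∑ ω : Option K × K, ‖∑ s, F (lineRd ω (σ ω) s)‖ ^ 2 ≤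
      q ^ 2 * (25 * q * nF) := by
    have c1 : 2 * ((q+1) * q * (q * nF)) + 2 * q * (3 * q * (q * nF)) ≤ q ^ 2 * (25 * q * nF) := by
      nlinarith [mul_nonneg (mul_nonneg hq0 hq0) (mul_nonneg hq0 hnF0),
        mul_nonneg hq0 (mul_nonneg hq0 hnF0)]
    have c2 : 2 * ∑ ω : Option K × K, ‖hkB ψ F 0 ω‖ ^ 2 +
        2 * q * ∑ ξ ∈ Finset.univ.erase 0, ∑ ω : Option K × K,
          ‖hkB ψ F ξ ω‖ ^ 2 ≤
        2 * ((q+1) * q * (q * nF)) + 2 * q * (3 * q * (q * nF)) := by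
      have h2q : (0:ℝ) ≤ 2 * q := by linarith
      have := mul_le_mul_of_nonneg_left hbxi h2q
      nlinarith [hb0]
    linarith
  have hq2 : (0:ℝ) < q ^ 2 := by nlinarith
  exact le_of_mul_le_mul_left final hq2

lemma hk_part2 (E' : Finset (K × K × K)) :
    ∑ ω : Option K × K,
      ((Finset.univ.sup fun τ : K =>
        (Finset.univ.filter fun s : K => lineRd ω τ s ∈ E').card : ℕ) : ℝ) ^ 2 ≤
    25 * (Fintype.card K : ℝ) * (E'.card : ℝ) := by
  obtain ⟨ψ, hψne⟩ := (AddChar.exists_apply_ne_zero (a := (1:K))).2 one_ne_zero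
  have hψ : ψ.IsPrimitive := AddChar.IsPrimitive.of_ne_one (fun h => hψne (by simp [h]))
  set F : K × K × K → ℂ := fun p => if p ∈ E' then 1 else 0 with hF
  have hex : ∀ ω : Option K × K, ∃ τ : K,
      (Finset.univ.sup fun τ : K =>
        (Finset.univ.filter fun s : K => lineRd ω τ s ∈ E').card) =
      (Finset.univ.filter fun s : K => lineRd ω (τ) s ∈ E').card := by
    intro ω
    obtain ⟨τ, _, h⟩ := Finset.exists_mem_eq_sup Finset.univ ⟨0, mem_univ 0⟩
      (fun τ : K => (Finset.univ.filter fun s : K => lineRd ω τ s ∈ E').card)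
    exact ⟨τ, h⟩
  choose σ hσ using hex
  have hterm : ∀ ω : Option K × K,
      ((Finset.univ.sup fun τ : K =>
        (Finset.univ.filter fun s : K => lineRd ω τ s ∈ E').card : ℕ) : ℝ) ^ 2 =
      ‖∑ s, F (lineRd ω (σ ω) s)‖ ^ 2 := by
    intro ω
    rw [hσ ω]
    have hsum : ∑ s : K, F (lineRd ω (σ ω) s) =
        ((Finset.univ.filter fun s : K => lineRd ω (σ ω) s ∈ E').card : ℂ) := by
      rw [hF]
      simp [Finset.sum_boole]
    rw [hsum, Complex.norm_natCast]
  have hnorm : ∑ p : K × K × K, ‖F p‖ ^ 2 = (E'.card : ℝ) := by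
    rw [hF]
    have : ∀ p : K × K × K, ‖(if p ∈ E' then (1:ℂ) else 0)‖ ^ 2 =
        (if p ∈ E' then (1:ℝ) else 0) := by
      intro p; split <;> simp
    rw [Finset.sum_congr rfl fun p _ => this p, Finset.sum_boole]
    congr 1
    simp [Finset.filter_univ_mem]
  calc ∑ ω : Option K × K,
      ((Finset.univ.sup fun τ : K =>
        (Finset.univ.filter fun s : K => lineRd ω τ s ∈ E').card : ℕ) : ℝ) ^ 2
      = ∑ ω : Option K × K, ‖∑ s, F (lineRd ω (σ ω) s)‖ ^ 2 :=
        Finset.sum_congr rfl fun ω _ => hterm ω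
    _ ≤ 25 * (Fintype.card K : ℝ) * ∑ p : K × K × K, ‖F p‖ ^ 2 :=
        hk_main hψ F σ
    _ = 25 * (Fintype.card K : ℝ) * (E'.card : ℝ) := by rw [hnorm]

end HeisenbergKakeyaAux

/-- A full-direction horizontal Heisenberg Kakeya set
`E ⊆ H₁(F_q)` (containing, for every `ω ∈ D₁`, a full horizontal line with
`Dir L = ω`) satisfies `|E| ≥ q³/25`.  Moreover, with
`M_E(ω) = max_{Dir L = ω} |E ∩ L|`, every set `E' ⊆ H₁(F_q)` satisfies
`∑_{ω ∈ D₁} M_{E'}(ω)² ≤ 25 q |E'|`. -/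
theorem stmt_18 {K : Type*} [Field K] [Fintype K] [DecidableEq K]
    (E : Finset (K × K × K))
    (hE : ∀ ω : Option K × K, ∃ τ : K, ∀ s : K, lineRd ω τ s ∈ E) :
    (Fintype.card K : ℝ) ^ 3 / 25 ≤ (E.card : ℝ) ∧
    ∀ E' : Finset (K × K × K),
      ∑ ω : Option K × K,
        ((Finset.univ.sup fun τ : K =>
          (Finset.univ.filter fun s : K => lineRd ω τ s ∈ E').card : ℕ) : ℝ) ^ 2 ≤
      25 * (Fintype.card K : ℝ) * (E'.card : ℝ) := by
  constructor
  · have h2 := hk_part2 E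
    set q : ℝ := (Fintype.card K : ℝ) with hq
    have hq1 : 1 ≤ q := by rw [hq]; exact_mod_cast Fintype.card_pos
    have hlow : ∀ ω : Option K × K, q ≤
        ((Finset.univ.sup fun τ : K =>
          (Finset.univ.filter fun s : K => lineRd ω τ s ∈ E).card : ℕ) : ℝ) := by
      intro ω
      obtain ⟨τ, hτ⟩ := hE ω
      have hfull : (Finset.univ.filter fun s : K => lineRd ω τ s ∈ E).card = Fintype.card K := by
        rw [Finset.filter_true_of_mem (fun s _ => hτ s), card_univ]
      have hle := Finset.le_sup
        (f := fun τ : K => (Finset.univ.filter fun s : K => lineRd ω τ s ∈ E).card)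
        (mem_univ τ)
      rw [hfull] at hle
      rw [hq]
      exact_mod_cast hle
    have hlow2 : ∑ ω : Option K × K, q ^ 2 ≤
        ∑ ω : Option K × K,
          ((Finset.univ.sup fun τ : K =>
            (Finset.univ.filter fun s : K => lineRd ω τ s ∈ E).card : ℕ) : ℝ) ^ 2 := by
      refine Finset.sum_le_sum fun ω _ => ?_
      have h0 : (0:ℝ) ≤ q := by linarith
      exact pow_le_pow_left₀ h0 (hlow ω) 2
    have hcardΩ : ((Fintype.card (Option K × K) : ℕ) : ℝ) = (q + 1) * q := by
      rw [hq]
      push_cast [Fintype.card_prod, Fintype.card_option]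
      ring
    rw [Finset.sum_const, card_univ, nsmul_eq_mul, hcardΩ] at hlow2
    have hchain : (q + 1) * q * q ^ 2 ≤ 25 * q * (E.card : ℝ) := le_trans hlow2 h2
    have hE0 : (0:ℝ) ≤ (E.card : ℝ) := Nat.cast_nonneg _
    rw [div_le_iff₀ (by norm_num : (0:ℝ) < 25)]
    nlinarith [hchain, hq1, hE0]
  · exact hk_part2
end
end

section
/- Let q be a prime power, let χ : F_q → ℂ be a nontrivial additive character, let ξ ∈ F_q with ξ ≠ 0, and let g : F_q^2 → ℂ. For m, γ ∈ F_q define U(m, γ) = ∑_{x ∈ F_q} g(x, m x − γ) · χ(ξ γ x). Then ∑_{m ∈ F_q} ∑_{γ ∈ F_q} |U(m, γ)|^2 ≤ 2 q · ∑_{x, y ∈ F_q} |g(x, y)|^2. -/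
/-!
`K` plays the role of the finite field `F_q` with `q = Fintype.card K` elements
(the cardinality of a finite field is automatically a prime power).  An additive
character of `F_q` with values in `ℂ` is an `AddChar K ℂ`; it is nontrivial iff
it is not the trivial character `1`.
-/

open Finset

section Stmt19Aux
open Finset Complex

variable {K : Type*} [Field K] [Fintype K]

lemma aux_orth (χ : AddChar K ℂ) (hχ : χ ≠ 1) {s : K} (hs : s ≠ 0) :
    ∑ t : K, χ (s * t) = 0 := by
  have h := AddChar.sum_eq_zero_of_ne_one (AddChar.IsPrimitive.of_ne_one hχ hs)
  simpa [AddChar.mulShift_apply] using h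

lemma aux_conj (χ : AddChar K ℂ) (a : K) : (starRingEnd ℂ) (χ a) = χ (-a) := by
  have h : 0 < ringChar K :=
    Nat.pos_of_ne_zero (CharP.char_ne_zero_of_finite K (ringChar K))
  rw [AddChar.starComp_apply h, AddChar.inv_apply]

lemma aux_key [DecidableEq K] (χ : AddChar K ℂ) (hχ : χ ≠ 1) {s : K} (hs : s ≠ 0) (u v : K) :
    ∑ t : K, χ (s * (u * t)) * χ (-(s * (v * t))) =
      if u = v then (Fintype.card K : ℂ) else 0 := by
  have h1 : ∀ t : K, χ (s * (u * t)) * χ (-(s * (v * t))) = χ ((s * (u - v)) * t) := by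
    intro t; rw [← AddChar.map_add_eq_mul]; congr 1; ring
  simp_rw [h1]
  by_cases huv : u = v
  · simp [huv]
  · rw [aux_orth χ hχ (mul_ne_zero hs (sub_ne_zero.mpr huv)), if_neg huv]

lemma aux_plancherel [DecidableEq K] (χ : AddChar K ℂ) (hχ : χ ≠ 1) {s : K} (hs : s ≠ 0) (h : K → ℂ) :
    ∑ t : K, (∑ u : K, h u * χ (s * (u * t))) *
        (starRingEnd ℂ) (∑ u : K, h u * χ (s * (u * t)))
      = (Fintype.card K : ℂ) * ∑ u : K, h u * (starRingEnd ℂ) (h u) := by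
  simp_rw [map_sum, map_mul, aux_conj]
  simp_rw [Finset.sum_mul_sum]
  have hpt : ∀ x i j : K, h i * χ (s * (i * x)) * ((starRingEnd ℂ) (h j) * χ (-(s * (j * x))))
      = h i * (starRingEnd ℂ) (h j) * (χ (s * (i * x)) * χ (-(s * (j * x)))) := by
    intro x i j; ring
  simp_rw [hpt]
  rw [Finset.sum_comm]
  refine Eq.trans (Finset.sum_congr rfl fun i _ => Finset.sum_comm) ?_
  simp_rw [← Finset.mul_sum, aux_key χ hχ hs, mul_ite, mul_zero,
    Finset.sum_ite_eq Finset.univ, Finset.mem_univ, if_true]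
  rw [Finset.mul_sum]
  exact Finset.sum_congr rfl fun i _ => by ring

lemma aux_bij {x x' : K} (hxx' : x ≠ x') (f : K → K → ℂ) :
    ∑ m : K, ∑ γ : K, f (m * x - γ) (m * x' - γ) = ∑ u : K, ∑ v : K, f u v := by
  have e1 : ∑ p : K × K, f (p.1 * x - p.2) (p.1 * x' - p.2)
      = ∑ m : K, ∑ γ : K, f (m * x - γ) (m * x' - γ) :=
    Fintype.sum_prod_type (f := fun p : K × K => f (p.1 * x - p.2) (p.1 * x' - p.2))
  have e2 : ∑ p : K × K, f p.1 p.2 = ∑ u : K, ∑ v : K, f u v :=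
    Fintype.sum_prod_type (f := fun p : K × K => f p.1 p.2)
  rw [← e1, ← e2]
  have hinj : Function.Injective (fun p : K × K => (p.1 * x - p.2, p.1 * x' - p.2)) := by
    rintro ⟨m₁, γ₁⟩ ⟨m₂, γ₂⟩ hp
    simp only [Prod.mk.injEq] at hp
    obtain ⟨h1, h2⟩ := hp
    have hm : m₁ * (x - x') = m₂ * (x - x') := by
      linear_combination h1 - h2
    have hm' : m₁ = m₂ := mul_right_cancel₀ (sub_ne_zero.mpr hxx') hm
    have hγ : γ₁ = γ₂ := by linear_combination hm' * x - h1
    simp [hm', hγ]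
  exact Fintype.sum_bijective _ ((Finite.injective_iff_bijective).mp hinj) _ _ (fun p => rfl)

lemma aux_line (c : K) (f : K → ℂ) : ∑ γ : K, f (c - γ) = ∑ y : K, f y :=
  Fintype.sum_bijective _ (Equiv.subLeft c).bijective _ _ (fun γ => rfl)

lemma aux_prod (F : K → K → ℂ) : ∑ p : K × K, F p.1 p.2 = ∑ a : K, ∑ b : K, F a b :=
  Fintype.sum_prod_type (f := fun p : K × K => F p.1 p.2)

lemma aux_swap4 (F : K → K → K → K → ℂ) :
    ∑ m : K, ∑ γ : K, ∑ x : K, ∑ y : K, F m γ x y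
      = ∑ x : K, ∑ y : K, ∑ m : K, ∑ γ : K, F m γ x y := by
  calc ∑ m : K, ∑ γ : K, ∑ x : K, ∑ y : K, F m γ x y
      = ∑ p : K × K, ∑ x : K, ∑ y : K, F p.1 p.2 x y :=
        (aux_prod (fun m γ => ∑ x : K, ∑ y : K, F m γ x y)).symm
    _ = ∑ p : K × K, ∑ r : K × K, F p.1 p.2 r.1 r.2 :=
        Finset.sum_congr rfl fun p _ => (aux_prod (fun x y => F p.1 p.2 x y)).symm
    _ = ∑ r : K × K, ∑ p : K × K, F p.1 p.2 r.1 r.2 := Finset.sum_comm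
    _ = ∑ r : K × K, ∑ m : K, ∑ γ : K, F m γ r.1 r.2 :=
        Finset.sum_congr rfl fun r _ => aux_prod (fun m γ => F m γ r.1 r.2)
    _ = ∑ x : K, ∑ y : K, ∑ m : K, ∑ γ : K, F m γ x y :=
        aux_prod (fun x y => ∑ m : K, ∑ γ : K, F m γ x y)


end Stmt19Aux

/-- key counting inequality for nonzero central frequencies.
Let `χ` be a nontrivial additive character of `F_q`, let `ξ ∈ F_q^*`, and let
`g : F_q² → ℂ`.  With `U(m, γ) = ∑_x g(x, m x - γ) χ(ξ γ x)`, one has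
`∑_{m, γ} |U(m, γ)|² ≤ 2 q ∑_{x, y} |g(x, y)|²`. -/
theorem stmt_19 {K : Type*} [Field K] [Fintype K]
    (χ : AddChar K ℂ) (hχ : χ ≠ 1) (ξ : K) (hξ : ξ ≠ 0) (g : K × K → ℂ) :
    ∑ m : K, ∑ γ : K,
        ‖∑ x : K, g (x, m * x - γ) * χ (ξ * γ * x)‖ ^ 2 ≤
      2 * (Fintype.card K : ℝ) * ∑ x : K, ∑ y : K, ‖g (x, y)‖ ^ 2 := by

  classical
  set cj := starRingEnd ℂ with hcj
  set U : K → K → ℂ := fun m γ => ∑ x : K, g (x, m * x - γ) * χ (ξ * γ * x) with hU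
  set F : K → K → ℂ := fun a b => ∑ u : K, g (a, u) * χ (ξ * (u * b)) with hF
  set S : ℂ := ∑ m : K, ∑ γ : K, U m γ * cj (U m γ) with hS
  set G : ℝ := ∑ x : K, ∑ y : K, ‖g (x, y)‖ ^ 2 with hG
  -- the LHS is the real part of S
  have hL : ∑ m : K, ∑ γ : K, ‖U m γ‖ ^ 2 = S.re := by
    rw [hS, Complex.re_sum]
    refine Finset.sum_congr rfl fun m _ => ?_
    rw [Complex.re_sum]
    refine Finset.sum_congr rfl fun γ _ => ?_
    rw [Complex.mul_conj, Complex.ofReal_re, Complex.sq_norm]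
  -- expand |U|² as a double sum
  have hexp : ∀ m γ : K, U m γ * cj (U m γ)
      = ∑ x : K, ∑ y : K, g (x, m * x - γ) * cj (g (y, m * y - γ)) * χ (ξ * γ * (x - y)) := by
    intro m γ
    rw [hU]
    simp only [map_sum, map_mul, Finset.sum_mul_sum]
    refine Finset.sum_congr rfl fun x _ => Finset.sum_congr rfl fun y _ => ?_
    rw [hcj, aux_conj]
    have hr : χ (ξ * γ * (x - y)) = χ (ξ * γ * x) * χ (-(ξ * γ * y)) := by
      rw [← AddChar.map_add_eq_mul]; congr 1; ring
    rw [hr]; ring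
  -- swap sums
  have hS2 : S = ∑ x : K, ∑ y : K, ∑ m : K, ∑ γ : K,
      g (x, m * x - γ) * cj (g (y, m * y - γ)) * χ (ξ * γ * (x - y)) := by
    rw [hS]
    simp_rw [hexp]
    exact aux_swap4 _
  -- diagonal terms
  have hdiag : ∀ x : K, (∑ m : K, ∑ γ : K,
      g (x, m * x - γ) * cj (g (x, m * x - γ)) * χ (ξ * γ * (x - x)))
      = (Fintype.card K : ℂ) * ∑ y : K, g (x, y) * cj (g (x, y)) := by
    intro x
    simp only [sub_self, mul_zero, AddChar.map_zero_eq_one, mul_one]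
    have h2 : ∀ m : K, ∑ γ : K, g (x, m * x - γ) * cj (g (x, m * x - γ))
        = ∑ y : K, g (x, y) * cj (g (x, y)) :=
      fun m => aux_line (m * x) (fun y => g (x, y) * cj (g (x, y)))
    simp_rw [h2]
    rw [Finset.sum_const, Finset.card_univ, nsmul_eq_mul]
  -- off-diagonal terms
  have hoff : ∀ x y : K, x ≠ y → (∑ m : K, ∑ γ : K,
      g (x, m * x - γ) * cj (g (y, m * y - γ)) * χ (ξ * γ * (x - y)))
      = F x y * cj (F y x) := by
    intro x y hxy
    have h1 : (∑ m : K, ∑ γ : K,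
        g (x, m * x - γ) * cj (g (y, m * y - γ)) * χ (ξ * γ * (x - y)))
        = ∑ m : K, ∑ γ : K, (fun u v => g (x, u) * cj (g (y, v))
            * χ (ξ * (u * y - x * v))) (m * x - γ) (m * y - γ) := by
      refine Finset.sum_congr rfl fun m _ => Finset.sum_congr rfl fun γ _ => ?_
      have hr : χ (ξ * γ * (x - y)) = χ (ξ * ((m * x - γ) * y - x * (m * y - γ))) := by
        congr 1; ring
      rw [hr]
    have h2 := aux_bij (f := fun u v => g (x, u) * cj (g (y, v)) * χ (ξ * (u * y - x * v))) hxy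
    refine h1.trans (h2.trans ?_)
    rw [hF]
    simp only [map_sum, map_mul, hcj, aux_conj, Finset.sum_mul_sum]
    refine Finset.sum_congr rfl fun u _ => Finset.sum_congr rfl fun v _ => ?_
    have hr : χ (ξ * (u * y - x * v)) = χ (ξ * (u * y)) * χ (-(ξ * (v * x))) := by
      rw [← AddChar.map_add_eq_mul]; congr 1; ring
    rw [hr]; ring
  -- combine into split form
  have hsplit : S = (∑ x : K, ∑ y : K, F x y * cj (F y x))
      + ∑ x : K, ((Fintype.card K : ℂ) * (∑ y : K, g (x, y) * cj (g (x, y)))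
          - F x x * cj (F x x)) := by
    rw [hS2, ← Finset.sum_add_distrib]
    refine Finset.sum_congr rfl fun x _ => ?_
    have hA : ∀ y : K, (∑ m : K, ∑ γ : K,
        g (x, m * x - γ) * cj (g (y, m * y - γ)) * χ (ξ * γ * (x - y)))
        = F x y * cj (F y x) + (if y = x then
            ((Fintype.card K : ℂ) * (∑ y : K, g (x, y) * cj (g (x, y)))
              - F x x * cj (F x x)) else 0) := by
      intro y
      by_cases h : y = x
      · subst h; rw [hdiag y]; simp only [if_true]; ring
      · rw [hoff x y (fun e => h e.symm), if_neg h, add_zero]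
    simp_rw [hA]
    rw [Finset.sum_add_distrib, Finset.sum_ite_eq' Finset.univ x, if_pos (Finset.mem_univ x)]
  -- pointwise real form
  have hreal : ∀ x : K, (∑ y : K, g (x, y) * cj (g (x, y)))
      = ((∑ y : K, ‖g (x, y)‖ ^ 2 : ℝ) : ℂ) := by
    intro x
    rw [Complex.ofReal_sum]
    exact Finset.sum_congr rfl fun y _ => by
      rw [hcj, Complex.mul_conj, Complex.sq_norm]
  -- Plancherel per row
  have hplan : ∀ x : K, ∑ y : K, ‖F x y‖ ^ 2
      = (Fintype.card K : ℝ) * ∑ u : K, ‖g (x, u)‖ ^ 2 := by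
    intro x
    have h := aux_plancherel χ hχ hξ (fun u => g (x, u))
    have h2 := congrArg Complex.re h
    rw [Complex.re_sum] at h2
    calc ∑ y : K, ‖F x y‖ ^ 2 = ∑ y : K, (F x y * cj (F x y)).re := by
          refine Finset.sum_congr rfl fun y _ => ?_
          rw [hcj, Complex.mul_conj, Complex.ofReal_re, Complex.sq_norm]
      _ = ((Fintype.card K : ℂ) * ∑ u : K, g (x, u) * cj (g (x, u))).re := h2
      _ = (Fintype.card K : ℝ) * ∑ u : K, ‖g (x, u)‖ ^ 2 := by
          rw [hreal x, ← Complex.ofReal_natCast, ← Complex.ofReal_mul, Complex.ofReal_re]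
  -- bound the full bilinear sum
  have hbound1 : (∑ x : K, ∑ y : K, F x y * cj (F y x)).re ≤ (Fintype.card K : ℝ) * G := by
    rw [Complex.re_sum]
    calc ∑ x : K, (∑ y : K, F x y * cj (F y x)).re
        = ∑ x : K, ∑ y : K, (F x y * cj (F y x)).re := by simp_rw [Complex.re_sum]
      _ ≤ ∑ x : K, ∑ y : K, ‖F x y‖ * ‖F y x‖ := by
          refine Finset.sum_le_sum fun x _ => Finset.sum_le_sum fun y _ => ?_
          refine (Complex.re_le_norm _).trans ?_
          rw [hcj, norm_mul, Complex.norm_conj]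
      _ ≤ ∑ x : K, ∑ y : K, (‖F x y‖ ^ 2 + ‖F y x‖ ^ 2) / 2 := by
          refine Finset.sum_le_sum fun x _ => Finset.sum_le_sum fun y _ => ?_
          nlinarith [sq_nonneg (‖F x y‖ - ‖F y x‖)]
      _ = ∑ x : K, ∑ y : K, ‖F x y‖ ^ 2 := by
          simp_rw [add_div, Finset.sum_add_distrib]
          have hsw : (∑ x : K, ∑ y : K, ‖F y x‖ ^ 2 / 2)
              = ∑ x : K, ∑ y : K, ‖F x y‖ ^ 2 / 2 := Finset.sum_comm
          rw [hsw, ← Finset.sum_add_distrib]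
          refine Finset.sum_congr rfl fun x _ => ?_
          rw [← Finset.sum_add_distrib]
          exact Finset.sum_congr rfl fun y _ => by ring
      _ = (Fintype.card K : ℝ) * G := by
          rw [hG, Finset.mul_sum]
          exact Finset.sum_congr rfl fun x _ => hplan x
  -- bound the diagonal correction
  have hbound2 : (∑ x : K, ((Fintype.card K : ℂ) * (∑ y : K, g (x, y) * cj (g (x, y)))
      - F x x * cj (F x x))).re ≤ (Fintype.card K : ℝ) * G := by
    rw [Complex.re_sum]
    have hterm : ∀ x : K, ((Fintype.card K : ℂ) * (∑ y : K, g (x, y) * cj (g (x, y)))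
        - F x x * cj (F x x)).re
        = (Fintype.card K : ℝ) * (∑ y : K, ‖g (x, y)‖ ^ 2)
            - Complex.normSq (F x x) := by
      intro x
      rw [hreal x, hcj, Complex.mul_conj, ← Complex.ofReal_natCast, ← Complex.ofReal_mul,
        ← Complex.ofReal_sub, Complex.ofReal_re]
    simp_rw [hterm]
    calc ∑ x : K, ((Fintype.card K : ℝ) * (∑ y : K, ‖g (x, y)‖ ^ 2)
          - Complex.normSq (F x x))
        ≤ ∑ x : K, (Fintype.card K : ℝ) * (∑ y : K, ‖g (x, y)‖ ^ 2) :=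
          Finset.sum_le_sum fun x _ => sub_le_self _ (Complex.normSq_nonneg _)
      _ = (Fintype.card K : ℝ) * G := by rw [hG, Finset.mul_sum]
  -- put everything together
  show ∑ m : K, ∑ γ : K, ‖U m γ‖ ^ 2 ≤ 2 * (Fintype.card K : ℝ) * G
  calc ∑ m : K, ∑ γ : K, ‖U m γ‖ ^ 2 = S.re := hL
    _ = (∑ x : K, ∑ y : K, F x y * cj (F y x)).re
        + (∑ x : K, ((Fintype.card K : ℂ) * (∑ y : K, g (x, y) * cj (g (x, y)))
            - F x x * cj (F x x))).re := by rw [hsplit, Complex.add_re]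
    _ ≤ (Fintype.card K : ℝ) * G + (Fintype.card K : ℝ) * G := add_le_add hbound1 hbound2
    _ = 2 * (Fintype.card K : ℝ) * G := by ring
end
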